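/- arXiv:2505.16106 — 13 statements merged into one kernel-verified Lean document; each statement's English description precedes it below -/
import Mathlib

section
/- Let T > 0, x > 0, ρ ≥ 0, c̲ ≥ 0, p ∈ (−∞,0) ∪ (0,1), and let K₁ ≤ K₂ be real numbers. For j = 1,2 and t ∈ [0,T] define g₁ʲ(t) = (pK_j − p·c̲ − ρ)(T−t), g₂₁(t) = e^{−ρ(T−t)} and g₂₂ʲ(t) = (K_j − c̲)·e^{−ρ(T−t)}·(T−t). Then: (i) g₂₂ʲ(t) = ∫_t^T (K_j − c̲)·e^{−ρ(s−t)}·g₂₁(s) ds for all t ∈ [0,T]; (ii) for all t ∈ [0,T], x·[1 − exp((g₁¹(t) − g₁²(t))/p)] = x·[1 − exp((g₂₂¹(t) − g₂₂²(t))/g₂₁(t))] = x·[1 − e^{(K₁−K₂)(T−t)}]; (iii) if K₁ < K₂, then the function t ↦ x·[1 − e^{(K₁−K₂)(T−t)}] is nonnegative and strictly decreasing on [0,T]. -/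
/-- Theorem 3.3: the data asset price when λ = 0 (no intertemporal consumption weight). -/
theorem stmt_1 (T x ρ c p K₁ K₂ : ℝ)
    (hT : 0 < T) (hx : 0 < x) (hρ : 0 ≤ ρ) (hc : 0 ≤ c)
    (hp : p < 1) (hp0 : p ≠ 0) (hK : K₁ ≤ K₂)
    (g1 : ℝ → ℝ → ℝ) (g21 : ℝ → ℝ) (g22 : ℝ → ℝ → ℝ)
    (hg1 : ∀ K t, g1 K t = (p * K - p * c - ρ) * (T - t))
    (hg21 : ∀ t, g21 t = Real.exp (-ρ * (T - t)))
    (hg22 : ∀ K t, g22 K t = (K - c) * Real.exp (-ρ * (T - t)) * (T - t)) :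
    (∀ K ∈ ({K₁, K₂} : Set ℝ), ∀ t ∈ Set.Icc (0:ℝ) T,
      g22 K t = ∫ s in t..T, (K - c) * Real.exp (-ρ * (s - t)) * g21 s) ∧
    (∀ t ∈ Set.Icc (0:ℝ) T,
      x * (1 - Real.exp ((g1 K₁ t - g1 K₂ t) / p)) = x * (1 - Real.exp ((K₁ - K₂) * (T - t))) ∧
      x * (1 - Real.exp ((g22 K₁ t - g22 K₂ t) / g21 t))
        = x * (1 - Real.exp ((K₁ - K₂) * (T - t)))) ∧
    (K₁ < K₂ →
      (∀ t ∈ Set.Icc (0:ℝ) T, 0 ≤ x * (1 - Real.exp ((K₁ - K₂) * (T - t)))) ∧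
      StrictAntiOn (fun t => x * (1 - Real.exp ((K₁ - K₂) * (T - t)))) (Set.Icc 0 T)) := by
  refine ⟨?_, ?_, ?_⟩
  · intro K _ t _
    have : ∀ s : ℝ, (K - c) * Real.exp (-ρ * (s - t)) * g21 s
        = (K - c) * Real.exp (-ρ * (T - t)) := by
      intro s
      rw [hg21, mul_assoc, ← Real.exp_add]
      ring_nf
    simp_rw [this]
    rw [intervalIntegral.integral_const, hg22, smul_eq_mul]
    ring
  · intro t _
    constructor
    · rw [hg1, hg1]
      congr 3
      field_simp
      ring
    · rw [hg22, hg22, hg21]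
      congr 3
      rw [div_eq_iff (Real.exp_ne_zero _)]
      ring
  · intro hlt
    have ha : K₁ - K₂ < 0 := by linarith
    constructor
    · intro t ht
      have h1 : (K₁ - K₂) * (T - t) ≤ 0 :=
        mul_nonpos_of_nonpos_of_nonneg ha.le (by linarith [ht.2])
      have := Real.exp_le_one_iff.mpr h1
      nlinarith
    · intro t1 _ t2 _ h12
      have : (K₁ - K₂) * (T - t1) < (K₁ - K₂) * (T - t2) := by nlinarith
      have := Real.exp_lt_exp.mpr this
      simp only
      nlinarith
end

section
/- Let T > 0 and let ρ, λ be real numbers with 0 < ρ ≤ λ, and let x > 0 and κ < 0. Then the function h(t) = 1/ρ + [(ρ−λ)(T−t) − 1]/[λe^{ρ(T−t)} + ρ − λ] is strictly decreasing on [0,T], and consequently the function P(t) = x·[1 − exp(κ·h(t))] is strictly decreasing on [0,T]. -/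
/-- Theorem 3.4, case 0 < ρ ≤ λ (logarithmic utility): the price is strictly decreasing in time. -/
theorem stmt_4 (T ρ lam x κ : ℝ) (hT : 0 < T) (hρ : 0 < ρ) (hρlam : ρ ≤ lam)
    (hx : 0 < x) (hκ : κ < 0) (h P : ℝ → ℝ)
    (hh : ∀ t, h t = 1 / ρ + ((ρ - lam) * (T - t) - 1) / (lam * Real.exp (ρ * (T - t)) + ρ - lam))
    (hP : ∀ t, P t = x * (1 - Real.exp (κ * h t))) :
    StrictAntiOn h (Set.Icc 0 T) ∧ StrictAntiOn P (Set.Icc 0 T) := by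
  have hlam : 0 < lam := lt_of_lt_of_le hρ hρlam
  set D : ℝ → ℝ := fun s => lam * Real.exp (ρ * s) + ρ - lam with hDdef
  set g : ℝ → ℝ := fun s => ((ρ - lam) * s - 1) / D s with hgdef
  have hDpos : ∀ s, 0 ≤ s → 0 < D s := by
    intro s hs
    have h1 : (1:ℝ) ≤ Real.exp (ρ * s) := Real.one_le_exp (by positivity)
    have h2 : lam * 1 ≤ lam * Real.exp (ρ * s) := by nlinarith
    simp only [hDdef]; nlinarith
  -- positivity of the derivative's numerator
  have hN : ∀ s, 0 ≤ s →
      0 < (ρ - lam) * D s - ((ρ - lam) * s - 1) * (lam * (Real.exp (ρ * s) * ρ)) := by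
    intro s hs
    set e := Real.exp (ρ * s) with hedef
    have hepos : 0 < e := Real.exp_pos _
    have he1 : (1:ℝ) ≤ e := Real.one_le_exp (by positivity)
    set b := 2*ρ - lam + ρ * s * (lam - ρ) with hbdef
    have key : (ρ - lam) * D s - ((ρ - lam) * s - 1) * (lam * (e * ρ))
        = lam * e * b + (lam - ρ)^2 := by
      simp only [hDdef, hbdef]; ring
    rw [key]
    rcases le_or_gt 0 b with hb | hb
    · have h6 : 0 < lam * b + (lam - ρ)^2 := by
        rcases eq_or_lt_of_le hρlam with hEq | hlt
        · have hz : lam - ρ = 0 := by linarith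
          have hbρ : b = ρ := by rw [hbdef, hz]; ring_nf; linarith
          rw [hbρ]
          nlinarith [sq_nonneg (lam - ρ), mul_pos hlam hρ]
        · nlinarith [mul_nonneg hlam.le hb]
      nlinarith [h6, mul_nonneg (mul_nonneg hlam.le hb) (by linarith : (0:ℝ) ≤ e - 1)]
    · -- here b < 0, which forces ρ < lam and ρ*s < 1
      have hlr : ρ < lam := by
        rcases eq_or_lt_of_le hρlam with hEq | hlt
        · exfalso
          have hz : ρ * s * (lam - ρ) = 0 := by
            rw [show lam - ρ = 0 from by linarith]; ring
          simp only [hbdef] at hb; linarith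
        · exact hlt
      have hu1 : ρ * s < 1 := by
        by_contra hcon
        push_neg at hcon
        have : (ρ * s - 1) * (lam - ρ) ≥ 0 :=
          mul_nonneg (by linarith) (by linarith)
        simp only [hbdef] at hb; nlinarith
      -- e * (1 - ρ*s) ≤ 1
      have hexpneg : 1 - ρ * s ≤ e⁻¹ := by
        have := Real.add_one_le_exp (-(ρ * s))
        rw [Real.exp_neg] at this
        linarith
      have h2 : (1 - ρ * s) * e ≤ 1 := by
        have := mul_le_mul_of_nonneg_right hexpneg hepos.le
        rwa [inv_mul_cancel₀ hepos.ne'] at this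
      have h3 : lam * b ≤ lam * b * ((1 - ρ * s) * e) := by
        have hlb : lam * b ≤ 0 := mul_nonpos_of_nonneg_of_nonpos hlam.le hb.le
        nlinarith
      have h5 : 0 < ρ^2 * (1 + s * (lam - ρ)) := by
        have : 0 ≤ s * (lam - ρ) := mul_nonneg hs (by linarith)
        nlinarith
      have hid : lam * b + (lam - ρ)^2 * (1 - ρ * s) = ρ^2 * (1 + s * (lam - ρ)) := by
        simp only [hbdef]; ring
      have h4 : 0 < (lam * e * b + (lam - ρ)^2) * (1 - ρ * s) := by nlinarith
      nlinarith
  -- derivative of g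
  have hder : ∀ s : ℝ, HasDerivAt g
      (((ρ - lam) * D s - ((ρ - lam) * s - 1) * (lam * (Real.exp (ρ * s) * ρ))) / (D s)^2) s
      ∨ True := fun s => Or.inr trivial
  have hderiv : ∀ s, D s ≠ 0 → HasDerivAt g
      (((ρ - lam) * D s - ((ρ - lam) * s - 1) * (lam * (Real.exp (ρ * s) * ρ))) / (D s)^2) s := by
    intro s hDne
    have hnum : HasDerivAt (fun s : ℝ => (ρ - lam) * s - 1) (ρ - lam) s := by
      simpa using ((hasDerivAt_id s).const_mul (ρ - lam)).sub_const 1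
    have hexp : HasDerivAt (fun s : ℝ => Real.exp (ρ * s)) (Real.exp (ρ * s) * ρ) s := by
      simpa using ((hasDerivAt_id s).const_mul ρ).exp
    have hDd : HasDerivAt D (lam * (Real.exp (ρ * s) * ρ)) s := by
      simpa [hDdef] using ((hexp.const_mul lam).add_const ρ).sub_const lam
    simpa [hgdef, Pi.div_def] using hnum.div hDd hDne
  -- g is strictly monotone on [0, T]
  have hgmono : StrictMonoOn g (Set.Icc 0 T) := by
    apply strictMonoOn_of_deriv_pos (convex_Icc 0 T)
    · apply ContinuousOn.div
      · fun_prop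
      · simp only [hDdef]; fun_prop
      · intro s hs; exact (hDpos s hs.1).ne'
    · intro s hs
      rw [interior_Icc] at hs
      rw [(hderiv s (hDpos s hs.1.le).ne').deriv]
      exact div_pos (hN s hs.1.le) (pow_pos (hDpos s hs.1.le) 2)
  have hhg : ∀ t, h t = 1 / ρ + g (T - t) := by
    intro t; rw [hh]
  have hAnti : StrictAntiOn h (Set.Icc 0 T) := by
    intro a ha b hb hab
    rw [hhg a, hhg b]
    have hmem1 : T - b ∈ Set.Icc (0:ℝ) T := ⟨by linarith [hb.2], by linarith [hb.1]⟩
    have hmem2 : T - a ∈ Set.Icc (0:ℝ) T := ⟨by linarith [ha.2], by linarith [ha.1]⟩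
    have : g (T - b) < g (T - a) := hgmono hmem1 hmem2 (by linarith)
    linarith
  refine ⟨hAnti, ?_⟩
  intro a ha b hb hab
  rw [hP a, hP b]
  have h1 : h b < h a := hAnti ha hb hab
  have h2 : κ * h a < κ * h b := by nlinarith
  have h3 : Real.exp (κ * h a) < Real.exp (κ * h b) := Real.exp_lt_exp.2 h2
  have h4 : 1 - Real.exp (κ * h b) < 1 - Real.exp (κ * h a) := by linarith
  exact mul_lt_mul_of_pos_left h4 hx
end

section
/- Let ρ > λ > 0, T > 0, x > 0 and κ < 0. Define h(t) = 1/ρ + [(ρ−λ)(T−t) − 1]/[λe^{ρ(T−t)} + ρ − λ] and P(t) = x·[1 − exp(κ·h(t))] for t ∈ [0,T]. Then there exists T* ∈ [0,T] such that P is strictly increasing on [0,T*] and strictly decreasing on [T*,T]. Moreover, if λρe^{ρT}(ρ−λ)T − (ρ−λ)² − (2ρ−λ)λe^{ρT} > 0 (which holds for all sufficiently large T), then T* ∈ (0,T). -/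
open Real Set


/-- Theorem 3.4, case ρ > λ > 0 (logarithmic utility): the price first increases and then
decreases in time; the turning point is interior when the horizon is large enough. -/
theorem stmt_5 (T ρ lam x κ : ℝ) (hT : 0 < T) (hlam : 0 < lam) (hρlam : lam < ρ)
    (hx : 0 < x) (hκ : κ < 0) (P : ℝ → ℝ)
    (hP : ∀ t, P t = x * (1 - Real.exp (κ *
      (1 / ρ + ((ρ - lam) * (T - t) - 1) / (lam * Real.exp (ρ * (T - t)) + ρ - lam))))) :
    (∃ Tstar ∈ Set.Icc (0:ℝ) T,
      StrictMonoOn P (Set.Icc 0 Tstar) ∧ StrictAntiOn P (Set.Icc Tstar T) ∧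
      (0 < lam * ρ * Real.exp (ρ * T) * (ρ - lam) * T - (ρ - lam) ^ 2
            - (2 * ρ - lam) * lam * Real.exp (ρ * T) →
        Tstar ∈ Set.Ioo 0 T)) ∧
    (∃ T0 : ℝ, ∀ T' ≥ T0,
      0 < lam * ρ * Real.exp (ρ * T') * (ρ - lam) * T' - (ρ - lam) ^ 2
            - (2 * ρ - lam) * lam * Real.exp (ρ * T')) := by
  have hρ : 0 < ρ := hlam.trans hρlam
  have hc : 0 < ρ - lam := by linarith
  -- the sign function g (numerator of h')
  set g : ℝ → ℝ := fun s =>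
    lam * Real.exp (ρ * s) * (ρ * (ρ - lam) * s - (2 * ρ - lam)) - (ρ - lam) ^ 2 with hg_def
  have hD : ∀ s : ℝ, 0 < lam * Real.exp (ρ * s) + ρ - lam := by
    intro s
    have := Real.exp_pos (ρ * s)
    nlinarith
  -- derivative of P
  have hPd : ∀ t : ℝ, HasDerivAt P
      (x * (-(Real.exp (κ * (1 / ρ + ((ρ - lam) * (T - t) - 1) /
          (lam * Real.exp (ρ * (T - t)) + ρ - lam))) *
        (κ * (g (T - t) / (lam * Real.exp (ρ * (T - t)) + ρ - lam) ^ 2))))) t := by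
    intro t
    have hrw : P = fun t => x * (1 - Real.exp (κ *
        (1 / ρ + ((ρ - lam) * (T - t) - 1) / (lam * Real.exp (ρ * (T - t)) + ρ - lam)))) :=
      funext hP
    rw [hrw]
    have h1 : HasDerivAt (fun t : ℝ => T - t) (-1) t := (hasDerivAt_id t).const_sub T
    have hN : HasDerivAt (fun t : ℝ => (ρ - lam) * (T - t) - 1) ((ρ - lam) * (-1)) t :=
      (h1.const_mul (ρ - lam)).sub_const 1
    have hE : HasDerivAt (fun t : ℝ => Real.exp (ρ * (T - t)))
        (Real.exp (ρ * (T - t)) * (ρ * (-1))) t := (h1.const_mul ρ).exp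
    have hDd : HasDerivAt (fun t : ℝ => lam * Real.exp (ρ * (T - t)) + ρ - lam)
        (lam * (Real.exp (ρ * (T - t)) * (ρ * (-1)))) t :=
      ((hE.const_mul lam).add_const ρ).sub_const lam
    have hQ := hN.div hDd (ne_of_gt (hD (T - t)))
    have hH := hQ.const_add (1 / ρ)
    have hfin := (((hH.const_mul κ).exp).const_sub 1).const_mul x
    convert hfin using 1
    · rfl
    · rfl
    · rfl
    have hnum : g (T - t) = (ρ - lam) * (-1) * (lam * Real.exp (ρ * (T - t)) + ρ - lam) -
        ((ρ - lam) * (T - t) - 1) * (lam * (Real.exp (ρ * (T - t)) * (ρ * (-1)))) := by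
      simp only [hg_def]; ring
    rw [hnum]
    rfl
  have hcont : Continuous P := continuous_iff_continuousAt.2 fun t => (hPd t).continuousAt
  -- sign of the derivative of P is the sign of g (T - t)
  have hsign_pos : ∀ t : ℝ, 0 < g (T - t) → 0 < deriv P t := by
    intro t hg
    rw [(hPd t).deriv]
    have hA : 0 < Real.exp (κ * (1 / ρ + ((ρ - lam) * (T - t) - 1) /
        (lam * Real.exp (ρ * (T - t)) + ρ - lam))) := Real.exp_pos _
    have hq : 0 < g (T - t) / (lam * Real.exp (ρ * (T - t)) + ρ - lam) ^ 2 :=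
      div_pos hg (pow_pos (hD (T - t)) 2)
    nlinarith [mul_pos (mul_pos hx hA) hq]
  have hsign_neg : ∀ t : ℝ, g (T - t) < 0 → deriv P t < 0 := by
    intro t hg
    rw [(hPd t).deriv]
    have hA : 0 < Real.exp (κ * (1 / ρ + ((ρ - lam) * (T - t) - 1) /
        (lam * Real.exp (ρ * (T - t)) + ρ - lam))) := Real.exp_pos _
    have hq : g (T - t) / (lam * Real.exp (ρ * (T - t)) + ρ - lam) ^ 2 < 0 :=
      div_neg_of_neg_of_pos hg (pow_pos (hD (T - t)) 2)
    nlinarith [mul_pos hx hA, mul_neg_of_pos_of_neg (mul_pos hx hA) hq]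
  -- derivative of g
  have hgd : ∀ s : ℝ, HasDerivAt g
      (lam * (Real.exp (ρ * s) * (ρ * 1)) * (ρ * (ρ - lam) * s - (2 * ρ - lam)) +
        lam * Real.exp (ρ * s) * (ρ * (ρ - lam) * 1)) s := by
    intro s
    rw [hg_def]
    have hE : HasDerivAt (fun s : ℝ => Real.exp (ρ * s)) (Real.exp (ρ * s) * (ρ * 1)) s :=
      ((hasDerivAt_id s).const_mul ρ).exp
    have hlin : HasDerivAt (fun s : ℝ => ρ * (ρ - lam) * s - (2 * ρ - lam))
        (ρ * (ρ - lam) * 1) s := ((hasDerivAt_id s).const_mul (ρ * (ρ - lam))).sub_const _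
    exact ((hE.const_mul lam).mul hlin).sub_const _
  have hgcont : Continuous g := by
    rw [hg_def]; fun_prop
  -- g is strictly increasing on [1/(ρ-lam), ∞)
  have hmono : StrictMonoOn g (Ici (1 / (ρ - lam))) := by
    apply strictMonoOn_of_deriv_pos (convex_Ici _) hgcont.continuousOn
    intro s hs
    rw [interior_Ici] at hs
    rw [(hgd s).deriv]
    have h1 : 1 < s * (ρ - lam) := (div_lt_iff₀ hc).mp hs
    have h2 : 0 < lam * ρ ^ 2 * Real.exp (ρ * s) * (s * (ρ - lam) - 1) :=
      mul_pos (by positivity) (sub_pos.mpr h1)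
    nlinarith [h2]
  -- g is negative on (-∞, 1/(ρ-lam)]
  have hneg : ∀ s : ℝ, s ≤ 1 / (ρ - lam) → g s < 0 := by
    intro s hs
    have hcs : s * (ρ - lam) ≤ 1 := (le_div_iff₀ hc).mp hs
    simp only [hg_def]
    nlinarith [mul_pos hlam (Real.exp_pos (ρ * s)),
      mul_nonneg (mul_pos hlam (Real.exp_pos (ρ * s))).le (sub_nonneg.mpr hcs)]
  -- combiner
  have key : ∀ Ts : ℝ, 0 ≤ Ts → Ts ≤ T →
      (∀ t ∈ Ioo (0:ℝ) Ts, 0 < g (T - t)) →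
      (∀ t ∈ Ioo Ts T, g (T - t) < 0) →
      StrictMonoOn P (Icc 0 Ts) ∧ StrictAntiOn P (Icc Ts T) := by
    intro Ts _ _ hpos hneg'
    constructor
    · apply strictMonoOn_of_deriv_pos (convex_Icc _ _) hcont.continuousOn
      intro t ht
      rw [interior_Icc] at ht
      exact hsign_pos t (hpos t ht)
    · apply strictAntiOn_of_deriv_neg (convex_Icc _ _) hcont.continuousOn
      intro t ht
      rw [interior_Icc] at ht
      exact hsign_neg t (hneg' t ht)
  -- the large horizon statement
  have hsecond : ∃ T0 : ℝ, ∀ T' ≥ T0,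
      0 < lam * ρ * Real.exp (ρ * T') * (ρ - lam) * T' - (ρ - lam) ^ 2
            - (2 * ρ - lam) * lam * Real.exp (ρ * T') := by
    refine ⟨1 + (lam * (2 * ρ - lam) + (ρ - lam) ^ 2) / (lam * ρ * (ρ - lam)), fun T' hT' => ?_⟩
    have hden : 0 < lam * ρ * (ρ - lam) := by positivity
    have hQ : lam * (2 * ρ - lam) + (ρ - lam) ^ 2 ≤ (T' - 1) * (lam * ρ * (ρ - lam)) :=
      (div_le_iff₀ hden).mp (by linarith)
    have hT'1 : 1 ≤ T' := by
      have h0 : 0 ≤ (lam * (2 * ρ - lam) + (ρ - lam) ^ 2) / (lam * ρ * (ρ - lam)) := by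
        have : 0 ≤ lam * (2 * ρ - lam) + (ρ - lam) ^ 2 := by nlinarith
        positivity
      linarith
    have he : 1 ≤ Real.exp (ρ * T') := Real.one_le_exp (by positivity)
    have hF : 0 ≤ lam * ρ * (ρ - lam) * T' - lam * (2 * ρ - lam) := by nlinarith [sq_nonneg (ρ - lam)]
    have hEF := mul_nonneg (by linarith : (0:ℝ) ≤ Real.exp (ρ * T') - 1) hF
    nlinarith [hEF]
  refine ⟨?_, hsecond⟩
  have hcond_eq : lam * ρ * Real.exp (ρ * T) * (ρ - lam) * T - (ρ - lam) ^ 2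
      - (2 * ρ - lam) * lam * Real.exp (ρ * T) = g T := by
    simp only [hg_def]; ring
  by_cases hgT : 0 < g T
  · -- interior turning point
    have hTc : 1 / (ρ - lam) < T := by
      by_contra h
      push_neg at h
      exact absurd hgT (not_lt.mpr (hneg T h).le)
    obtain ⟨s₀, hs₀mem, hs₀⟩ : ∃ s₀ ∈ Ioo (1 / (ρ - lam)) T, g s₀ = 0 := by
      have hsub := intermediate_value_Ioo hTc.le hgcont.continuousOn
      have h0mem : (0:ℝ) ∈ Ioo (g (1 / (ρ - lam))) (g T) := ⟨hneg _ le_rfl, hgT⟩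
      obtain ⟨s₀, hmem, heq⟩ := hsub h0mem
      exact ⟨s₀, hmem, heq⟩
    have h1c : 0 < 1 / (ρ - lam) := by positivity
    have hTs0 : 0 < T - s₀ := by linarith [hs₀mem.2]
    have hTs1 : T - s₀ < T := by linarith [hs₀mem.1]
    have hpos : ∀ t ∈ Ioo (0:ℝ) (T - s₀), 0 < g (T - t) := by
      intro t ht
      have h1 : s₀ < T - t := by linarith [ht.2]
      have := hmono (le_of_lt hs₀mem.1) (le_of_lt (hs₀mem.1.trans h1)) h1
      rw [hs₀] at this
      exact this
    have hneg' : ∀ t ∈ Ioo (T - s₀) T, g (T - t) < 0 := by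
      intro t ht
      have h1 : T - t < s₀ := by linarith [ht.1]
      rcases le_or_gt (T - t) (1 / (ρ - lam)) with h | h
      · exact hneg _ h
      · have := hmono (le_of_lt h) (le_of_lt hs₀mem.1) h1
        rw [hs₀] at this
        exact this
    obtain ⟨hM, hA⟩ := key (T - s₀) hTs0.le hTs1.le hpos hneg'
    exact ⟨T - s₀, ⟨hTs0.le, hTs1.le⟩, hM, hA, fun _ => ⟨hTs0, hTs1⟩⟩
  · -- turning point at 0: price decreasing throughout
    push_neg at hgT
    have hpos : ∀ t ∈ Ioo (0:ℝ) (0:ℝ), 0 < g (T - t) := by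
      intro t ht
      exact absurd ht (by simp)
    have hneg' : ∀ t ∈ Ioo (0:ℝ) T, g (T - t) < 0 := by
      intro t ht
      rcases le_or_gt (T - t) (1 / (ρ - lam)) with h | h
      · exact hneg _ h
      · have hTt : T - t < T := by linarith [ht.1]
        have := hmono (le_of_lt h) (le_of_lt (h.trans hTt)) hTt
        linarith
    obtain ⟨hM, hA⟩ := key 0 le_rfl hT.le hpos hneg'
    refine ⟨0, ⟨le_rfl, hT.le⟩, hM, hA, fun hcond => ?_⟩
    rw [hcond_eq] at hcond
    linarith
end

section
/- Let T > 0, p ∈ (−∞,0) ∪ (0,1), λ > 0 and ρ, K ∈ ℝ. (i) If ρ ≠ pK, set θ = (ρ − pK)/(1 − p) and φ(t) = (λ^{1/(p−1)} − 1/θ)·e^{θ(t−T)} + 1/θ for t ∈ [0,T]. Then φ(t) > 0 for all t ∈ [0,T], and the function g₁(t) := ln λ + (1−p)·ln φ(t) satisfies g₁(T) = 0 and g₁′(t) = −[pK + (1−p)·λ^{1/(1−p)}·e^{g₁(t)/(p−1)} − ρ] for all t ∈ [0,T]. (ii) If ρ = pK, then g₁(t) := ln λ + (1−p)·ln(λ^{1/(p−1)}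 + T − t) satisfies g₁(T) = 0 and the same differential equation on [0,T]. -/
/-- Explicit solution (proved inside Theorem 3.5) of the terminal value problem
g₁′(t) = −[pK + (1−p)λ^{1/(1−p)} e^{g₁(t)/(p−1)} − ρ], g₁(T) = 0. -/
theorem stmt_7 (T p lam ρ K θ : ℝ) (φ g₁ g₁' : ℝ → ℝ)
    (hT : 0 < T) (hp : p < 1) (hp0 : p ≠ 0) (hlam : 0 < lam)
    (hθ : θ = (ρ - p * K) / (1 - p))
    (hφ : ∀ t, φ t = (lam ^ (1 / (p - 1)) - 1 / θ) * Real.exp (θ * (t - T)) + 1 / θ)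
    (hg : ∀ t, g₁ t = Real.log lam + (1 - p) * Real.log (φ t))
    (hg' : ∀ t, g₁' t = Real.log lam + (1 - p) * Real.log (lam ^ (1 / (p - 1)) + T - t)) :
    (ρ ≠ p * K →
      (∀ t ∈ Set.Icc (0:ℝ) T, 0 < φ t) ∧ g₁ T = 0 ∧
      ∀ t ∈ Set.Icc (0:ℝ) T,
        HasDerivAt g₁
          (-(p * K + (1 - p) * lam ^ (1 / (1 - p)) * Real.exp (g₁ t / (p - 1)) - ρ)) t) ∧
    (ρ = p * K →
      g₁' T = 0 ∧
      ∀ t ∈ Set.Icc (0:ℝ) T,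
        HasDerivAt g₁'
          (-(p * K + (1 - p) * lam ^ (1 / (1 - p)) * Real.exp (g₁' t / (p - 1)) - ρ)) t) := by
  have hp1 : p - 1 ≠ 0 := by intro h; linarith
  have hp1' : (0:ℝ) < 1 - p := by linarith
  set A : ℝ := lam ^ (1 / (p - 1)) with hAdef
  have hA : 0 < A := Real.rpow_pos_of_pos hlam _
  have hlogA : Real.log A = (1 / (p - 1)) * Real.log lam := Real.log_rpow hlam _
  have hLA : lam ^ (1 / (1 - p)) * A = 1 := by
    rw [hAdef, ← Real.rpow_add hlam]
    rw [show 1 / (1 - p) + 1 / (p - 1) = 0 by field_simp; ring]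
    exact Real.rpow_zero lam
  have hexp : ∀ x : ℝ, 0 < x →
      Real.exp ((Real.log lam + (1 - p) * Real.log x) / (p - 1)) = A / x := by
    intro x hx
    rw [show (Real.log lam + (1 - p) * Real.log x) / (p - 1)
        = Real.log lam * (1 / (p - 1)) + (- Real.log x) by field_simp; ring]
    rw [Real.exp_add, Real.exp_neg, Real.exp_log hx, hAdef,
      Real.rpow_def_of_pos hlam, div_eq_mul_inv]
    ring
  constructor
  · intro hρ
    have hθ0 : θ ≠ 0 := by
      rw [hθ]
      exact div_ne_zero (sub_ne_zero.mpr hρ) (ne_of_gt hp1')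
    have hθ' : θ * (1 - p) = ρ - p * K := by
      rw [hθ]; field_simp
    -- positivity of φ on [0, T]
    have hpos : ∀ t ∈ Set.Icc (0:ℝ) T, 0 < φ t := by
      intro t ht
      have hts : t - T ≤ 0 := by linarith [ht.2]
      have hrw : φ t = A * Real.exp (θ * (t - T))
          + (1 - Real.exp (θ * (t - T))) / θ := by
        rw [hφ t]; field_simp; ring
      have key : 0 ≤ (1 - Real.exp (θ * (t - T))) / θ := by
        rcases hθ0.lt_or_gt with h | h
        · have : (0:ℝ) ≤ θ * (t - T) := by nlinarith
          have h1 : 1 ≤ Real.exp (θ * (t - T)) := Real.one_le_exp this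
          exact div_nonneg_iff.mpr (Or.inr ⟨by linarith, h.le⟩)
        · have : θ * (t - T) ≤ 0 := mul_nonpos_of_nonneg_of_nonpos h.le hts
          have h1 : Real.exp (θ * (t - T)) ≤ 1 := Real.exp_le_one_iff.mpr this
          exact div_nonneg (by linarith) h.le
      have := Real.exp_pos (θ * (t - T))
      rw [hrw]
      nlinarith
    refine ⟨hpos, ?_, ?_⟩
    · rw [hg T, hφ T]
      simp only [sub_self, mul_zero, Real.exp_zero, mul_one, sub_add_cancel]
      rw [hlogA]; field_simp
      ring
    · intro t ht
      have hφt : 0 < φ t := hpos t ht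
      have hgfun : g₁ = fun s => Real.log lam + (1 - p) * Real.log (φ s) :=
        funext hg
      have hφd : HasDerivAt φ ((A - 1 / θ) * θ * Real.exp (θ * (t - T))) t := by
        have h1 : HasDerivAt (fun s : ℝ => θ * (s - T)) θ t := by
          simpa using ((hasDerivAt_id t).sub_const T).const_mul θ
        have h2 := ((h1.exp).const_mul (A - 1 / θ)).add_const (1 / θ)
        have h3 : HasDerivAt φ ((A - 1 / θ) * (Real.exp (θ * (t - T)) * θ)) t := by
          rw [show φ = fun s => (A - 1/θ) * Real.exp (θ * (s - T)) + 1/θ from funext hφ]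
          exact h2
        (convert h3 using 1) <;> ring
      have hd : HasDerivAt g₁
          ((1 - p) * (((A - 1 / θ) * θ * Real.exp (θ * (t - T))) / φ t)) t := by
        rw [hgfun]
        exact ((hφd.log (ne_of_gt hφt)).const_mul (1 - p)).const_add (Real.log lam)
      convert hd using 1
      have he : Real.exp (g₁ t / (p - 1)) = A / φ t := by
        rw [hg t]; exact hexp (φ t) hφt
      rw [he]
      have hφ' : (A - 1 / θ) * θ * Real.exp (θ * (t - T)) = θ * φ t - 1 := by
        rw [hφ t]; field_simp; ring
      rw [hφ']
      have h1 : (1 - p) * lam ^ (1 / (1 - p)) * (A / φ t) = (1 - p) / φ t := by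
        field_simp
        nlinarith [hLA]
      rw [h1]
      field_simp
      nlinarith [hθ']
  · intro hρ
    have hpos : ∀ t ∈ Set.Icc (0:ℝ) T, 0 < A + T - t := by
      intro t ht; have := ht.2; linarith
    constructor
    · rw [hg' T]
      simp only [add_sub_cancel_right]
      rw [hlogA]; field_simp
      ring
    · intro t ht
      have hxt : 0 < A + T - t := hpos t ht
      have hgfun : g₁' = fun s => Real.log lam + (1 - p) * Real.log (A + T - s) :=
        funext hg'
      have hφd : HasDerivAt (fun s : ℝ => A + T - s) (-1) t := by
        simpa using (hasDerivAt_id t).const_sub (A + T)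
      have hd : HasDerivAt g₁' ((1 - p) * ((-1) / (A + T - t))) t := by
        rw [hgfun]
        exact ((hφd.log (ne_of_gt hxt)).const_mul (1 - p)).const_add (Real.log lam)
      convert hd using 1
      have he : Real.exp (g₁' t / (p - 1)) = A / (A + T - t) := by
        rw [hg' t]
        exact hexp _ hxt
      rw [he, hρ]
      field_simp
      nlinarith [hLA]
end

section
/- Let T > 0, t ∈ [0,T), λ > 0 and p ∈ (−∞,0) ∪ (0,1). Define G : ℝ → ℝ by G(y) = λ^{1/(p−1)}·e^{y(t−T)} − (e^{y(t−T)} − 1)/y for y ≠ 0 and G(0) = λ^{1/(p−1)} + (T − t). Then G is continuous on ℝ, strictly decreasing on ℝ, and G(y) > 0 for every y ∈ ℝ. -/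
/-- Properties of the function g₁₂(t,·) of equation (3.19) in Theorem 3.5:
continuity, strict monotonicity and positivity. -/
theorem stmt_8 (T t lam p : ℝ) (hT : 0 < T) (ht : t ∈ Set.Ico 0 T) (hlam : 0 < lam)
    (hp : p < 1) (hp0 : p ≠ 0) (G : ℝ → ℝ)
    (hG : ∀ y : ℝ, G y = if y = 0 then lam ^ (1 / (p - 1)) + (T - t)
        else lam ^ (1 / (p - 1)) * Real.exp (y * (t - T)) - (Real.exp (y * (t - T)) - 1) / y) :
    Continuous G ∧ StrictAnti G ∧ ∀ y : ℝ, 0 < G y := by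
  obtain ⟨ht0, htT⟩ := ht
  set c := lam ^ (1 / (p - 1)) with hc
  have hcpos : 0 < c := Real.rpow_pos_of_pos hlam _
  set s := T - t with hs
  have hspos : 0 < s := sub_pos.2 htT
  -- compute the auxiliary integral
  have hint : ∀ y : ℝ, y ≠ 0 →
      (∫ u in (0:ℝ)..s, Real.exp (-(u * y))) = (1 - Real.exp (-(s * y))) / y := by
    intro y hy
    have hderiv : ∀ u ∈ Set.uIcc (0:ℝ) s,
        HasDerivAt (fun u => -(Real.exp (-(u * y)) / y)) (Real.exp (-(u * y))) u := by
      intro u _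
      have h1 : HasDerivAt (fun u : ℝ => -(u * y)) (-y) u := by
        simpa using ((hasDerivAt_id u).mul_const y).fun_neg
      have h2 := (h1.exp.div_const y).fun_neg
      convert h2 using 1
      · rfl
      · rfl
      · rw [mul_neg, neg_div, neg_neg, mul_div_cancel_right₀ _ hy]
    have hcont : IntervalIntegrable (fun u => Real.exp (-(u * y))) MeasureTheory.volume 0 s :=
      (Real.continuous_exp.comp (by continuity)).intervalIntegrable _ _
    rw [intervalIntegral.integral_eq_sub_of_hasDerivAt hderiv hcont]
    field_simp
    simp only [mul_zero, neg_zero, Real.exp_zero]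
    ring
  -- rewrite G using the integral
  have key : ∀ y : ℝ, G y = c * Real.exp (-(s * y)) + ∫ u in (0:ℝ)..s, Real.exp (-(u * y)) := by
    intro y
    rw [hG]
    by_cases hy : y = 0
    · subst hy
      simp [hs]
    · rw [if_neg hy, hint y hy]
      have h1 : y * (t - T) = -(s * y) := by rw [hs]; ring
      rw [h1]
      field_simp
      ring
  have hGfun : G = fun y => c * Real.exp (-(s * y)) + ∫ u in (0:ℝ)..s, Real.exp (-(u * y)) :=
    funext key
  refine ⟨?_, ?_, ?_⟩
  · rw [hGfun]
    apply Continuous.add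
    · continuity
    · exact intervalIntegral.continuous_parametric_intervalIntegral_of_continuous'
        (f := fun y u => Real.exp (-(u * y))) (by fun_prop) 0 s
  · intro y z hyz
    rw [key y, key z]
    have h1 : c * Real.exp (-(s * z)) < c * Real.exp (-(s * y)) := by
      apply mul_lt_mul_of_pos_left _ hcpos
      exact Real.exp_lt_exp.2 (by nlinarith)
    have h2 : (∫ u in (0:ℝ)..s, Real.exp (-(u * z))) ≤ ∫ u in (0:ℝ)..s, Real.exp (-(u * y)) := by
      apply intervalIntegral.integral_mono_on hspos.le
      · exact (Real.continuous_exp.comp (by continuity)).intervalIntegrable _ _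
      · exact (Real.continuous_exp.comp (by continuity)).intervalIntegrable _ _
      · intro u hu
        exact Real.exp_le_exp.2 (by nlinarith [hu.1])
    linarith
  · intro y
    rw [key y]
    have h1 : 0 < c * Real.exp (-(s * y)) := mul_pos hcpos (Real.exp_pos _)
    have h2 : (0:ℝ) ≤ ∫ u in (0:ℝ)..s, Real.exp (-(u * y)) :=
      intervalIntegral.integral_nonneg hspos.le fun u _ => (Real.exp_pos _).le
    linarith
end

section
/- Let T > 0, p ∈ (−∞,0) ∪ (0,1), λ > 0 and ρ, K ∈ ℝ, and let g₁ : [0,T] → ℝ be the (unique) differentiable function satisfying g₁′(t) = −[pK + (1−p)·λ^{1/(1−p)}·e^{g₁(t)/(p−1)} − ρ] on [0,T] with g₁(T) = 0. If ρ − pK > (1−p)·λ^{1/(1−p)}, then g₁′(t) > 0 for all t ∈ [0,T); if ρ − pK ≤ (1−p)·λ^{1/(1−p)}, then g₁′(t) ≤ 0 for all t ∈ [0,T). -/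
/-- Sign dichotomy (equation (3.22)) in Theorem 3.5 for the derivative of the time component
of the power-utility value function. -/
theorem stmt_9 (T p lam ρ K : ℝ) (g₁ : ℝ → ℝ)
    (hT : 0 < T) (hp : p < 1) (hp0 : p ≠ 0) (hlam : 0 < lam)
    (hode : ∀ t ∈ Set.Icc (0:ℝ) T,
      HasDerivAt g₁
        (-(p * K + (1 - p) * lam ^ (1 / (1 - p)) * Real.exp (g₁ t / (p - 1)) - ρ)) t)
    (hterm : g₁ T = 0) :
    ((1 - p) * lam ^ (1 / (1 - p)) < ρ - p * K →
      ∀ t ∈ Set.Ico (0:ℝ) T, 0 < deriv g₁ t) ∧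
    (ρ - p * K ≤ (1 - p) * lam ^ (1 / (1 - p)) →
      ∀ t ∈ Set.Ico (0:ℝ) T, deriv g₁ t ≤ 0) := by
  have h1p : 0 < 1 - p := by linarith
  set B : ℝ := (1 - p) * lam ^ (1 / (1 - p)) with hB
  have hBpos : 0 < B := mul_pos h1p (Real.rpow_pos_of_pos hlam _)
  set a : ℝ := ρ - p * K with ha
  set k : ℝ := a / (1 - p) with hk
  set v : ℝ → ℝ := fun t => Real.exp (g₁ t / (1 - p)) with hv
  set q : ℝ → ℝ := fun t => a * v t - B with hq
  set r : ℝ → ℝ := fun t => q t * Real.exp (-k * t) with hr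
  have hvpos : ∀ t, 0 < v t := fun t => Real.exp_pos _
  have hexp : ∀ t, Real.exp (g₁ t / (p - 1)) = 1 / v t := by
    intro t
    rw [show p - 1 = -(1 - p) by ring, div_neg, Real.exp_neg]
    simp [hv, one_div]
  -- derivative of q
  have hqder : ∀ t ∈ Set.Icc (0:ℝ) T, HasDerivAt q (k * q t) t := by
    intro t ht
    have hg := hode t ht
    have hgd : HasDerivAt (fun s => g₁ s / (1 - p))
        ((-(p * K + B * Real.exp (g₁ t / (p - 1)) - ρ)) / (1 - p)) t := hg.div_const _
    have hvd : HasDerivAt v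
        (Real.exp (g₁ t / (1 - p)) * ((-(p * K + B * Real.exp (g₁ t / (p - 1)) - ρ)) / (1 - p)))
        t := hgd.exp
    have hqd := (hvd.const_mul a).sub_const B
    refine hqd.congr_deriv ?_
    rw [hexp t]
    have hvne : v t ≠ 0 := (hvpos t).ne'
    have : Real.exp (g₁ t / (1 - p)) = v t := rfl
    rw [this]
    field_simp [hq, hk, ha]
    simp only [hq, hk, ha]
    field_simp [h1p.ne']
    ring
  -- derivative of r is zero
  have hrder : ∀ t ∈ Set.Icc (0:ℝ) T, HasDerivAt r 0 t := by
    intro t ht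
    have he : HasDerivAt (fun s => Real.exp (-k * s)) (Real.exp (-k * t) * (-k)) t := by
      simpa using ((hasDerivAt_id t).const_mul (-k)).exp
    have := (hqder t ht).mul he
    refine this.congr_deriv ?_
    ring
  -- r is constant on [0,T]
  have hrc : ∀ t ∈ Set.Icc (0:ℝ) T, r t = r 0 := by
    apply constant_of_has_deriv_right_zero
    · exact fun t ht => (hrder t ht).continuousAt.continuousWithinAt
    · exact fun t ht => ((hrder t (Set.Ico_subset_Icc_self ht)).hasDerivWithinAt)
  have hrT : r T = r 0 := hrc T ⟨hT.le, le_rfl⟩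
  have hqT : q T = a - B := by simp [hq, hv, hterm]
  -- key identity
  have key : ∀ t ∈ Set.Icc (0:ℝ) T,
      q t * Real.exp (-k * t) = (a - B) * Real.exp (-k * T) := by
    intro t ht
    have := (hrc t ht).trans hrT.symm
    simpa [hr, hqT] using this
  -- deriv g₁ t = q t / v t on Icc
  have hderiv : ∀ t ∈ Set.Icc (0:ℝ) T, deriv g₁ t = q t / v t := by
    intro t ht
    rw [(hode t ht).deriv, hexp t]
    have hvne : v t ≠ 0 := (hvpos t).ne'
    field_simp [hq, ha]
    ring
  constructor
  · intro hcase t ht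
    have ht' : t ∈ Set.Icc (0:ℝ) T := Set.Ico_subset_Icc_self ht
    rw [hderiv t ht']
    apply div_pos _ (hvpos t)
    have hk1 := key t ht'
    have h1 : 0 < Real.exp (-k * t) := Real.exp_pos _
    have h2 : 0 < Real.exp (-k * T) := Real.exp_pos _
    nlinarith
  · intro hcase t ht
    have ht' : t ∈ Set.Icc (0:ℝ) T := Set.Ico_subset_Icc_self ht
    rw [hderiv t ht']
    apply div_nonpos_of_nonpos_of_nonneg _ (hvpos t).le
    have hk1 := key t ht'
    have h1 : 0 < Real.exp (-k * t) := Real.exp_pos _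
    have h2 : 0 < Real.exp (-k * T) := Real.exp_pos _
    nlinarith
end

section
/- Let T > 0, p ∈ (−∞,0) ∪ (0,1), λ > 0, ρ ∈ ℝ and K₁ < K₂ be real numbers. For j = 1,2 let g₁ʲ : [0,T] → ℝ be differentiable with (g₁ʲ)′(t) = −[pK_j + (1−p)·λ^{1/(1−p)}·e^{g₁ʲ(t)/(p−1)} − ρ] on [0,T] and g₁ʲ(T) = 0. Then p·g₁¹(t) < p·g₁²(t) for every t ∈ [0,T). -/
/-- Comparison (equation (3.23)) in Theorem 3.5: p·g₁¹(t) < p·g₁²(t) on [0,T) when K₁ < K₂. -/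
theorem stmt_10 (T p lam ρ K₁ K₂ : ℝ) (g1 g2 : ℝ → ℝ)
    (hT : 0 < T) (hp : p < 1) (hp0 : p ≠ 0) (hlam : 0 < lam) (hK : K₁ < K₂)
    (hode1 : ∀ t ∈ Set.Icc (0:ℝ) T,
      HasDerivAt g1
        (-(p * K₁ + (1 - p) * lam ^ (1 / (1 - p)) * Real.exp (g1 t / (p - 1)) - ρ)) t)
    (hterm1 : g1 T = 0)
    (hode2 : ∀ t ∈ Set.Icc (0:ℝ) T,
      HasDerivAt g2
        (-(p * K₂ + (1 - p) * lam ^ (1 / (1 - p)) * Real.exp (g2 t / (p - 1)) - ρ)) t)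
    (hterm2 : g2 T = 0) :
    ∀ t ∈ Set.Ico (0:ℝ) T, p * g1 t < p * g2 t := by
  set c : ℝ := (1 - p) * lam ^ (1 / (1 - p)) with hc
  have hcpos : 0 < c := mul_pos (by linarith) (Real.rpow_pos_of_pos hlam _)
  set ε : ℝ := p ^ 2 * (K₂ - K₁) with hε
  have hεpos : 0 < ε := mul_pos (by positivity) (by linarith)
  set u : ℝ → ℝ := fun t => p * g2 t - p * g1 t with hu
  -- derivative of u
  have hu' : ∀ x ∈ Set.Icc (0:ℝ) T,
      HasDerivAt u
        (p * (-(p * K₂ + c * Real.exp (g2 x / (p - 1)) - ρ))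
          - p * (-(p * K₁ + c * Real.exp (g1 x / (p - 1)) - ρ))) x := by
    intro x hx
    exact ((hode2 x hx).const_mul p).sub ((hode1 x hx).const_mul p)
  -- bound on the derivative whenever u x ≤ 0
  have hbound : ∀ x, u x ≤ 0 →
      p * (-(p * K₂ + c * Real.exp (g2 x / (p - 1)) - ρ))
        - p * (-(p * K₁ + c * Real.exp (g1 x / (p - 1)) - ρ)) ≤ -ε := by
    intro x hux
    have key : p * (Real.exp (g1 x / (p - 1)) - Real.exp (g2 x / (p - 1))) ≤ 0 := by
      rcases lt_or_gt_of_ne hp0 with hneg | hpos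
      · -- p < 0 : then u x ≤ 0 means g2 x ≥ g1 x... careful
        have hg : g1 x ≤ g2 x := by
          have := hux
          simp only [hu] at this
          nlinarith
        have : g2 x / (p - 1) ≤ g1 x / (p - 1) :=
          div_le_div_of_nonpos_of_le (by linarith) hg
        have hE : Real.exp (g2 x / (p - 1)) ≤ Real.exp (g1 x / (p - 1)) :=
          Real.exp_le_exp.2 this
        nlinarith
      · -- 0 < p : then g2 x ≤ g1 x
        have hg : g2 x ≤ g1 x := by
          have := hux
          simp only [hu] at this
          nlinarith
        have : g1 x / (p - 1) ≤ g2 x / (p - 1) :=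
          div_le_div_of_nonpos_of_le (by linarith) hg
        have hE : Real.exp (g1 x / (p - 1)) ≤ Real.exp (g2 x / (p - 1)) :=
          Real.exp_le_exp.2 this
        nlinarith
    nlinarith [key, hcpos, mul_nonneg (le_of_lt hcpos)
      (le_of_lt (mul_pos (Real.exp_pos (g1 x / (p - 1))) (Real.exp_pos (g2 x / (p - 1)))))]
  -- main argument
  intro t₀ ht₀
  by_contra hcon
  push_neg at hcon
  have hut₀ : u t₀ ≤ 0 := by simp only [hu]; linarith
  -- fencing: u T ≤ u t₀ - (ε/2)(T - t₀)
  set B : ℝ → ℝ := fun t => u t₀ - ε / 2 * (t - t₀) with hB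
  have hmem : ∀ x ∈ Set.Icc t₀ T, x ∈ Set.Icc (0:ℝ) T := by
    intro x hx
    exact ⟨le_trans ht₀.1 hx.1, hx.2⟩
  have hcontu : ContinuousOn u (Set.Icc t₀ T) := fun x hx =>
    (hu' x (hmem x hx)).continuousAt.continuousWithinAt
  have hderivu : ∀ x ∈ Set.Ico t₀ T,
      HasDerivWithinAt u
        (p * (-(p * K₂ + c * Real.exp (g2 x / (p - 1)) - ρ))
          - p * (-(p * K₁ + c * Real.exp (g1 x / (p - 1)) - ρ))) (Set.Ici x) x :=
    fun x hx => (hu' x (hmem x ⟨hx.1, le_of_lt hx.2⟩)).hasDerivWithinAt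
  have hBa : u t₀ ≤ B t₀ := by simp [hB]
  have hBd : ∀ x, HasDerivAt B (-(ε / 2)) x := by
    intro x
    have : HasDerivAt B (0 - ε / 2 * 1) x :=
      (hasDerivAt_const x (u t₀)).sub (((hasDerivAt_id x).sub_const t₀).const_mul (ε / 2))
    simpa using this
  have hbnd : ∀ x ∈ Set.Ico t₀ T, u x = B x →
      p * (-(p * K₂ + c * Real.exp (g2 x / (p - 1)) - ρ))
        - p * (-(p * K₁ + c * Real.exp (g1 x / (p - 1)) - ρ)) < -(ε / 2) := by
    intro x hx hxB
    have hx0 : u x ≤ 0 := by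
      have h1 : B x ≤ u t₀ := by
        simp only [hB]
        nlinarith [hx.1, hεpos]
      linarith [hxB ▸ h1]
    have := hbound x hx0
    linarith
  have hfence : ∀ ⦃x⦄, x ∈ Set.Icc t₀ T → u x ≤ B x :=
    image_le_of_deriv_right_lt_deriv_boundary hcontu hderivu hBa hBd hbnd
  have hTfence := hfence (Set.right_mem_Icc.2 (le_of_lt ht₀.2))
  have huT : u T = 0 := by simp [hu, hterm1, hterm2]
  have : B T < 0 := by
    simp only [hB]
    nlinarith [ht₀.2, hεpos]
  linarith
end

section
/- Let T > 0, p ∈ (−∞,0) ∪ (0,1), λ > 0, ρ ∈ ℝ, x > 0, and K₁ < K₂ real numbers satisfying ρ − max(pK₁, pK₂) ≤ (1−p)·λ^{1/(1−p)}. For j = 1,2 let g₁ʲ : [0,T] → ℝ be differentiable with (g₁ʲ)′(t) = −[pK_j + (1−p)·λ^{1/(1−p)}·e^{g₁ʲ(t)/(p−1)} − ρ] on [0,T] and g₁ʲ(T) = 0. Then the function t ↦ p·(g₁¹(t) − g₁²(t)) is strictly increasing on [0,T], and consequently the function P(t) = x·[1 − exp((g₁¹(t) − g₁²(t))/p)]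 is strictly decreasing on [0,T]. -/
open Set Real Filter Topology

/-- Derivative of the conserved quantity `(L e^{g/(p-1)} - a) e^{(g - a t)/(1-p)}` is zero. -/
private lemma derivA_zero {T p a L : ℝ} (hp : p < 1) {g : ℝ → ℝ}
    (hode : ∀ t ∈ Set.Icc (0:ℝ) T, HasDerivAt g (a - L * Real.exp (g t / (p - 1))) t) :
    ∀ t ∈ Set.Icc (0:ℝ) T,
      HasDerivAt (fun t => (L * Real.exp (g t / (p - 1)) - a) *
        Real.exp ((g t - a * t) / (1 - p))) 0 t := by
  intro t ht
  have hp1 : p - 1 ≠ 0 := sub_ne_zero.mpr (ne_of_lt hp)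
  have hp1' : (1:ℝ) - p ≠ 0 := sub_ne_zero.mpr (ne_of_gt hp)
  have hg := hode t ht
  have h1 : HasDerivAt (fun t => L * Real.exp (g t / (p - 1)) - a)
      (L * (Real.exp (g t / (p - 1)) * ((a - L * Real.exp (g t / (p - 1))) / (p - 1)))) t :=
    (((hg.div_const (p - 1)).exp).const_mul L).sub_const a
  have h2 : HasDerivAt (fun t => Real.exp ((g t - a * t) / (1 - p)))
      (Real.exp ((g t - a * t) / (1 - p)) *
        (((a - L * Real.exp (g t / (p - 1))) - a * 1) / (1 - p))) t := by
    have hid : HasDerivAt (fun t : ℝ => a * t) (a * 1) t := (hasDerivAt_id t).const_mul a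
    exact ((hg.sub hid).div_const (1 - p)).exp
  have := h1.mul h2
  refine this.congr_deriv ?_
  simp only [div_eq_mul_inv, show (1:ℝ) - p = -(p - 1) by ring, inv_neg]
  ring

/-- The sign formula: `L e^{g(t)/(p-1)} - a = (L - a) e^{(a t - g t - a T)/(1-p)}`. -/
private lemma h_formula {T p a L : ℝ} (hp : p < 1) (hT : 0 ≤ T) {g : ℝ → ℝ}
    (hode : ∀ t ∈ Set.Icc (0:ℝ) T, HasDerivAt g (a - L * Real.exp (g t / (p - 1))) t)
    (hterm : g T = 0) :
    ∀ t ∈ Set.Icc (0:ℝ) T, L * Real.exp (g t / (p - 1)) - a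
      = (L - a) * Real.exp ((a * t - g t - a * T) / (1 - p)) := by
  set A : ℝ → ℝ := fun t => (L * Real.exp (g t / (p - 1)) - a) *
      Real.exp ((g t - a * t) / (1 - p)) with hA
  have hderiv := derivA_zero hp hode
  have hcont : ContinuousOn A (Set.Icc 0 T) := fun s hs =>
    (hderiv s hs).continuousAt.continuousWithinAt
  have hconst : ∀ s ∈ Set.Icc (0:ℝ) T, A s = A 0 :=
    constant_of_has_deriv_right_zero hcont fun s hs =>
      (hderiv s (Set.Ico_subset_Icc_self hs)).hasDerivWithinAt
  intro t ht
  have hAt : A t = A T := by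
    rw [hconst t ht, hconst T (Set.right_mem_Icc.mpr hT)]
  have hAT : A T = (L - a) * Real.exp ((0 - a * T) / (1 - p)) := by
    simp [hA, hterm]
  have hE : Real.exp ((g t - a * t) / (1 - p)) ≠ 0 := Real.exp_ne_zero _
  have key : (L * Real.exp (g t / (p - 1)) - a) * Real.exp ((g t - a * t) / (1 - p))
      = (L - a) * Real.exp ((0 - a * T) / (1 - p)) := by rw [← hAT]; exact hAt
  have hcomb : Real.exp ((a * t - g t - a * T) / (1 - p)) *
      Real.exp ((g t - a * t) / (1 - p)) = Real.exp ((0 - a * T) / (1 - p)) := by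
    rw [← Real.exp_add]
    congr 1
    ring
  apply mul_right_cancel₀ hE
  rw [key, mul_assoc, hcomb]

/-- If `f T > 0` and at every zero of `f` on `[0,T]` its derivative is negative,
then `f > 0` on `[0,T]`. -/
private lemma pos_on_Icc {T : ℝ} {f f' : ℝ → ℝ}
    (hd : ∀ t ∈ Set.Icc (0:ℝ) T, HasDerivAt f (f' t) t)
    (hfT : 0 < f T)
    (hzero : ∀ t ∈ Set.Icc (0:ℝ) T, f t = 0 → f' t < 0) :
    ∀ t ∈ Set.Icc (0:ℝ) T, 0 < f t := by
  intro t₀ ht₀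
  by_contra hle
  push_neg at hle
  have ht₀T : t₀ ≤ T := ht₀.2
  set S : Set ℝ := Set.Icc t₀ T ∩ f ⁻¹' Set.Iic 0 with hS
  have hsub : Set.Icc t₀ T ⊆ Set.Icc 0 T := Set.Icc_subset_Icc ht₀.1 le_rfl
  have hcont : ContinuousOn f (Set.Icc t₀ T) := fun s hs =>
    (hd s (hsub hs)).continuousAt.continuousWithinAt
  have hSclosed : IsClosed S :=
    hcont.preimage_isClosed_of_isClosed isClosed_Icc isClosed_Iic
  have hne : t₀ ∈ S := ⟨⟨le_rfl, ht₀T⟩, hle⟩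
  have hbdd : BddAbove S := ⟨T, fun s hs => hs.1.2⟩
  set s := sSup S with hs
  have hsmem : s ∈ S := hSclosed.csSup_mem ⟨t₀, hne⟩ hbdd
  have hsIcc : s ∈ Set.Icc (0:ℝ) T := hsub hsmem.1
  have hfs_le : f s ≤ 0 := hsmem.2
  have hsT : s < T := lt_of_le_of_ne hsmem.1.2 (by
    intro h; rw [h] at hfs_le; linarith)
  have hpos : ∀ u ∈ Set.Ioc s T, 0 < f u := by
    intro u hu
    by_contra hu0
    push_neg at hu0
    have : u ∈ S := ⟨⟨le_trans hsmem.1.1 hu.1.le, hu.2⟩, hu0⟩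
    exact absurd (le_csSup hbdd this) (not_le.mpr hu.1)
  have hIoc : Set.Ioc s T ∈ 𝓝[>] s := Ioc_mem_nhdsGT_of_mem ⟨le_rfl, hsT⟩
  have hfs0 : f s = 0 := by
    by_contra h
    have hneg : f s < 0 := lt_of_le_of_ne hfs_le h
    have hca : ContinuousAt f s := (hd s hsIcc).continuousAt
    have hev : ∀ᶠ u in 𝓝 s, f u < 0 := hca.eventually_lt_const hneg
    have hev' : ∀ᶠ u in 𝓝[>] s, f u < 0 := hev.filter_mono nhdsWithin_le_nhds
    obtain ⟨u, hu1, hu2⟩ := (hev'.and (eventually_of_mem hIoc fun _ h => h)).exists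
    exact absurd (hpos u hu2) (not_lt.mpr hu1.le)
  have hf's : f' s < 0 := hzero s hsIcc hfs0
  have hslope : Filter.Tendsto (slope f s) (𝓝[≠] s) (𝓝 (f' s)) :=
    hasDerivAt_iff_tendsto_slope.mp (hd s hsIcc)
  have hev : ∀ᶠ u in 𝓝[≠] s, slope f s u < 0 :=
    hslope.eventually_lt_const hf's
  have hmono : 𝓝[>] s ≤ 𝓝[≠] s :=
    nhdsWithin_mono s fun u hu => ne_of_gt hu
  have hev' : ∀ᶠ u in 𝓝[>] s, slope f s u < 0 := hev.filter_mono hmono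
  obtain ⟨u, hu1, hu2⟩ := (hev'.and (eventually_of_mem hIoc fun _ h => h)).exists
  have hupos : 0 < f u := hpos u hu2
  have husg : 0 < u - s := sub_pos.mpr hu2.1
  have : slope f s u = f u / (u - s) := by
    rw [slope_def_field, hfs0]; ring
  rw [this] at hu1
  exact absurd (div_pos hupos husg) (not_lt.mpr hu1.le)

/-- First monotonicity case of Theorem 3.5 (power utility with consumption):
when ρ − max(pK₁,pK₂) ≤ (1−p)λ^{1/(1−p)}, the data asset price decreases in time. -/
theorem stmt_11 (T p lam ρ x K₁ K₂ : ℝ) (g1 g2 : ℝ → ℝ)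
    (hT : 0 < T) (hp : p < 1) (hp0 : p ≠ 0) (hlam : 0 < lam) (hx : 0 < x) (hK : K₁ < K₂)
    (hsmall : ρ - max (p * K₁) (p * K₂) ≤ (1 - p) * lam ^ (1 / (1 - p)))
    (hode1 : ∀ t ∈ Set.Icc (0:ℝ) T,
      HasDerivAt g1
        (-(p * K₁ + (1 - p) * lam ^ (1 / (1 - p)) * Real.exp (g1 t / (p - 1)) - ρ)) t)
    (hterm1 : g1 T = 0)
    (hode2 : ∀ t ∈ Set.Icc (0:ℝ) T,
      HasDerivAt g2
        (-(p * K₂ + (1 - p) * lam ^ (1 / (1 - p)) * Real.exp (g2 t / (p - 1)) - ρ)) t)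
    (hterm2 : g2 T = 0) :
    StrictMonoOn (fun t => p * (g1 t - g2 t)) (Set.Icc 0 T) ∧
    StrictAntiOn (fun t => x * (1 - Real.exp ((g1 t - g2 t) / p))) (Set.Icc 0 T) := by
  have hp1 : p - 1 ≠ 0 := sub_ne_zero.mpr (ne_of_lt hp)
  have h1p : (0:ℝ) < 1 - p := by linarith
  set L : ℝ := (1 - p) * lam ^ (1 / (1 - p)) with hLdef
  have hL : 0 < L := mul_pos h1p (Real.rpow_pos_of_pos hlam _)
  set a₁ : ℝ := ρ - p * K₁ with ha₁
  set a₂ : ℝ := ρ - p * K₂ with ha₂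
  have ha12 : a₁ ≠ a₂ := by
    simp only [ha₁, ha₂]
    intro h
    have : p * K₁ = p * K₂ := by linarith
    exact absurd (mul_left_cancel₀ hp0 this) (ne_of_lt hK)
  have hmin : min a₁ a₂ ≤ L := by
    rcases le_total (p * K₁) (p * K₂) with h | h
    · have : max (p * K₁) (p * K₂) = p * K₂ := max_eq_right h
      rw [this] at hsmall
      exact le_trans (min_le_right _ _) hsmall
    · have : max (p * K₁) (p * K₂) = p * K₁ := max_eq_left h
      rw [this] at hsmall
      exact le_trans (min_le_left _ _) hsmall
  have hode1' : ∀ t ∈ Set.Icc (0:ℝ) T,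
      HasDerivAt g1 (a₁ - L * Real.exp (g1 t / (p - 1))) t := by
    intro t ht
    convert hode1 t ht using 1
    simp only [ha₁, hLdef]; ring
  have hode2' : ∀ t ∈ Set.Icc (0:ℝ) T,
      HasDerivAt g2 (a₂ - L * Real.exp (g2 t / (p - 1))) t := by
    intro t ht
    convert hode2 t ht using 1
    simp only [ha₂, hLdef]; ring
  have hform1 := h_formula hp hT.le hode1' hterm1
  have hform2 := h_formula hp hT.le hode2' hterm2
  -- the derivative of φ = p (g1 - g2)
  set F : ℝ → ℝ := fun t =>
    p * ((L * Real.exp (g2 t / (p - 1)) - a₂) - (L * Real.exp (g1 t / (p - 1)) - a₁)) with hF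
  set F' : ℝ → ℝ := fun t =>
    p * (L * (Real.exp (g2 t / (p - 1)) * ((a₂ - L * Real.exp (g2 t / (p - 1))) / (p - 1)))
       - L * (Real.exp (g1 t / (p - 1)) * ((a₁ - L * Real.exp (g1 t / (p - 1))) / (p - 1)))) with hF'
  have hderivF : ∀ t ∈ Set.Icc (0:ℝ) T, HasDerivAt F (F' t) t := by
    intro t ht
    have h1 : HasDerivAt (fun t => L * Real.exp (g1 t / (p - 1)) - a₁)
        (L * (Real.exp (g1 t / (p - 1)) * ((a₁ - L * Real.exp (g1 t / (p - 1))) / (p - 1)))) t :=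
      ((((hode1' t ht).div_const (p - 1)).exp).const_mul L).sub_const a₁
    have h2 : HasDerivAt (fun t => L * Real.exp (g2 t / (p - 1)) - a₂)
        (L * (Real.exp (g2 t / (p - 1)) * ((a₂ - L * Real.exp (g2 t / (p - 1))) / (p - 1)))) t :=
      ((((hode2' t ht).div_const (p - 1)).exp).const_mul L).sub_const a₂
    exact (h2.sub h1).const_mul p
  have hderivφ : ∀ t ∈ Set.Icc (0:ℝ) T,
      HasDerivAt (fun t => p * (g1 t - g2 t)) (F t) t := by
    intro t ht
    have := ((hode1' t ht).sub (hode2' t ht)).const_mul p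
    refine this.congr_deriv ?_
    simp only [hF]; ring
  have hp2 : 0 < p * p := mul_self_pos.mpr hp0
  have hFT : 0 < F T := by
    have : F T = p * (a₁ - a₂) := by
      simp [hF, hterm1, hterm2]
    rw [this]
    have : a₁ - a₂ = p * (K₂ - K₁) := by simp only [ha₁, ha₂]; ring
    rw [this]
    have : p * (p * (K₂ - K₁)) = p * p * (K₂ - K₁) := by ring
    rw [this]
    exact mul_pos hp2 (by linarith)
  have hzero : ∀ t ∈ Set.Icc (0:ℝ) T, F t = 0 → F' t < 0 := by
    intro t ht hFt
    set u₁ : ℝ := Real.exp (g1 t / (p - 1)) with hu₁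
    set u₂ : ℝ := Real.exp (g2 t / (p - 1)) with hu₂
    set h : ℝ := L * u₁ - a₁ with hh
    have heq : L * u₂ - a₂ = h := by
      have : p * ((L * u₂ - a₂) - (L * u₁ - a₁)) = 0 := hFt
      have := mul_eq_zero.mp this
      rcases this with h' | h'
      · exact absurd h' hp0
      · simp only [hh]; linarith
    -- h > 0
    have hE1 : 0 < Real.exp ((a₁ * t - g1 t - a₁ * T) / (1 - p)) := Real.exp_pos _
    have hE2 : 0 < Real.exp ((a₂ * t - g2 t - a₂ * T) / (1 - p)) := Real.exp_pos _
    have hf1 : h = (L - a₁) * Real.exp ((a₁ * t - g1 t - a₁ * T) / (1 - p)) := hform1 t ht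
    have hf2 : h = (L - a₂) * Real.exp ((a₂ * t - g2 t - a₂ * T) / (1 - p)) := by
      rw [← heq]; exact hform2 t ht
    have hhne : h ≠ 0 := by
      intro h0
      have e1 : L - a₁ = 0 := by
        by_contra hne
        exact hne (by
          have := hf1
          rw [h0] at this
          rcases mul_eq_zero.mp this.symm with h' | h'
          · exact h'
          · exact absurd h' (ne_of_gt hE1))
      have e2 : L - a₂ = 0 := by
        have := hf2
        rw [h0] at this
        rcases mul_eq_zero.mp this.symm with h' | h'
        · exact h'
        · exact absurd h' (ne_of_gt hE2)
      exact ha12 (by linarith)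
    have hhnn : 0 ≤ h := by
      rcases min_le_iff.mp hmin with h' | h'
      · rw [hf1]; exact mul_nonneg (by linarith) hE1.le
      · rw [hf2]; exact mul_nonneg (by linarith) hE2.le
    have hhpos : 0 < h := lt_of_le_of_ne hhnn (Ne.symm hhne)
    -- compute F' t
    have hu1v : u₁ = (h + a₁) / L := by
      field_simp [hh]
      rw [hh]; ring
    have hu2v : u₂ = (h + a₂) / L := by
      rw [eq_div_iff (ne_of_gt hL)]
      linarith [heq]
    have hF't : F' t = p * (a₂ - a₁) * h / (1 - p) := by
      show p * (L * (u₂ * ((a₂ - L * u₂) / (p - 1)))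
         - L * (u₁ * ((a₁ - L * u₁) / (p - 1)))) = p * (a₂ - a₁) * h / (1 - p)
      rw [hu1v, hu2v]
      field_simp
      ring
    rw [hF't]
    have hnum : p * (a₂ - a₁) * h < 0 := by
      have : p * (a₂ - a₁) = p * p * (K₁ - K₂) := by simp only [ha₁, ha₂]; ring
      rw [this]
      exact mul_neg_of_neg_of_pos (mul_neg_of_pos_of_neg hp2 (by linarith)) hhpos
    exact div_neg_of_neg_of_pos hnum h1p
  have hFpos : ∀ t ∈ Set.Icc (0:ℝ) T, 0 < F t := pos_on_Icc hderivF hFT hzero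
  -- strict monotonicity of φ
  have hmono : StrictMonoOn (fun t => p * (g1 t - g2 t)) (Set.Icc 0 T) := by
    apply strictMonoOn_of_deriv_pos (convex_Icc 0 T)
    · exact fun s hs => (hderivφ s hs).continuousAt.continuousWithinAt
    · intro s hs
      rw [interior_Icc] at hs
      have hsIcc : s ∈ Set.Icc (0:ℝ) T := Set.Ioo_subset_Icc_self hs
      rw [(hderivφ s hsIcc).deriv]
      exact hFpos s hsIcc
  refine ⟨hmono, ?_⟩
  intro s hs t ht hst
  have h1 : p * (g1 s - g2 s) < p * (g1 t - g2 t) := hmono hs ht hst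
  have h2 : (g1 s - g2 s) / p < (g1 t - g2 t) / p := by
    have e : ∀ y : ℝ, y / p = p * y / (p * p) := by
      intro y; rw [mul_div_mul_left y p hp0]
    rw [e (g1 s - g2 s), e (g1 t - g2 t)]
    exact (div_lt_div_iff_of_pos_right hp2).mpr h1
  have h3 : Real.exp ((g1 s - g2 s) / p) < Real.exp ((g1 t - g2 t) / p) :=
    Real.exp_lt_exp.mpr h2
  simp only
  nlinarith [h3]
end

section
/- Let T > 0, p ∈ (−∞,0) ∪ (0,1), λ > 0, ρ ∈ ℝ, x > 0, and K₁ < K₂ real numbers satisfying ρ − max(pK₁, pK₂) > (1−p)·λ^{1/(1−p)}. For j = 1,2 let g₁ʲ : [0,T] → ℝ be differentiable with (g₁ʲ)′(t) = −[pK_j + (1−p)·λ^{1/(1−p)}·e^{g₁ʲ(t)/(p−1)} − ρ] on [0,T] and g₁ʲ(T) = 0, and set P(t) = x·[1 − exp((g₁¹(t) − g₁²(t))/p)]. Then there exists T* ∈ [0,T] such that P is strictly increasing on [0,T*] and strictly decreasing on [T*,T]; moreover, there exists T̄ > 0 (depending only on p, λ, ρ, K₁, K₂) such that T* > 0 whenever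 T ≥ T̄. -/
open Real Set Filter

/-- Single-crossing lemma: a function of the form `Q + e^{βs}(u e^{ks} + w)` with
`Q > 0`, `β,k > 0`, `u < 0` that is positive at `0` is positive before some `s₀ > 0`
and negative after it. -/
lemma crossing_aux (Q β u k w : ℝ) (hQ : 0 < Q) (hβ : 0 < β) (hu : u < 0) (hk : 0 < k)
    (h0 : 0 < Q + Real.exp (β * 0) * (u * Real.exp (k * 0) + w)) :
    ∃ s₀ > (0:ℝ),
      (∀ s, 0 ≤ s → s < s₀ → 0 < Q + Real.exp (β * s) * (u * Real.exp (k * s) + w)) ∧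
      (∀ s, s₀ < s → Q + Real.exp (β * s) * (u * Real.exp (k * s) + w) < 0) := by
  set ξ : ℝ → ℝ := fun s => u * Real.exp (k * s) + w with hξ
  set φ : ℝ → ℝ := fun s => Q + Real.exp (β * s) * ξ s with hφ
  have hφc : Continuous φ := by
    apply continuous_const.add
    exact (Real.continuous_exp.comp (continuous_const.mul continuous_id)).mul
      ((continuous_const.mul (Real.continuous_exp.comp (continuous_const.mul continuous_id))).add
        continuous_const)
  have hξanti : StrictAnti ξ := by
    intro s t hst
    have h1 : Real.exp (k * s) < Real.exp (k * t) := Real.exp_lt_exp.2 (by nlinarith)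
    simp only [hξ]
    nlinarith
  have hstep : ∀ s t, φ s ≤ 0 → s < t → φ t < φ s := by
    intro s t hs hst
    simp only [hφ] at hs ⊢
    have h1 : Real.exp (β * s) * ξ s ≤ -Q := by linarith
    have h2 : ξ s < 0 := by nlinarith [Real.exp_pos (β * s)]
    have h3 : ξ t < ξ s := hξanti hst
    have h4 : Real.exp (β * s) < Real.exp (β * t) := Real.exp_lt_exp.2 (by nlinarith)
    have h5 : Real.exp (β * t) * ξ t < Real.exp (β * s) * ξ s := by
      nlinarith [Real.exp_pos (β * s), Real.exp_pos (β * t)]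
    linarith
  have hbot : Tendsto ξ atTop atBot := by
    have h1 : Tendsto (fun s : ℝ => k * s) atTop atTop :=
      tendsto_id.const_mul_atTop hk
    have h2 : Tendsto (fun s : ℝ => Real.exp (k * s)) atTop atTop :=
      Real.tendsto_exp_atTop.comp h1
    have h3 : Tendsto (fun s : ℝ => u * Real.exp (k * s)) atTop atBot :=
      (tendsto_const_mul_atBot_of_neg hu).2 h2
    simpa [hξ] using tendsto_atBot_add_const_right atTop w h3
  obtain ⟨s₁, hs₁⟩ :=
    ((hbot.eventually (eventually_le_atBot (-Q - 1))).and (eventually_ge_atTop (1:ℝ))).exists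
  have hφs₁ : φ s₁ < 0 := by
    have h1 : (1:ℝ) ≤ Real.exp (β * s₁) := Real.one_le_exp (by nlinarith [hs₁.2])
    have h2 : ξ s₁ < 0 := by linarith [hs₁.1]
    simp only [hφ]
    nlinarith [hs₁.1]
  set S := {s : ℝ | 0 ≤ s ∧ φ s ≤ 0} with hS
  have hne : S.Nonempty := ⟨s₁, by constructor <;> linarith [hs₁.2, hφs₁]⟩
  have hbdd : BddBelow S := ⟨0, fun s hs => hs.1⟩
  have h0' : 0 < φ 0 := by simpa [hφ, hξ] using h0
  obtain ⟨ε, hε, hball⟩ : ∃ ε > 0, ∀ y : ℝ, dist y 0 < ε → 0 < φ y :=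
    Metric.eventually_nhds_iff.1 ((hφc.tendsto 0).eventually (eventually_gt_nhds h0'))
  have hs₀pos : 0 < sInf S := by
    refine lt_of_lt_of_le hε (le_csInf hne ?_)
    intro s hs
    by_contra hlt
    push_neg at hlt
    have := hball s (by rw [Real.dist_eq, sub_zero, abs_of_nonneg hs.1]; exact hlt)
    linarith [hs.2]
  refine ⟨sInf S, hs₀pos, ?_, ?_⟩
  · intro s h0s hss₀
    by_contra hle
    push_neg at hle
    exact absurd (csInf_le hbdd ⟨h0s, hle⟩) (not_le.2 hss₀)
  · intro s hs
    obtain ⟨s', hs'S, hs's⟩ := exists_lt_of_csInf_lt hne hs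
    have h1 := hstep s' s hs'S.2 hs's
    have h2 := hs'S.2
    simp only [hφ, hξ] at h1 h2
    linarith

/-- Explicit solution of the scalar ODE `g' = a - c e^{g/(q-1)}`, `g(T) = 0`, expressed in
terms of `v = e^{g/(1-q)}`, which satisfies a linear ODE. -/
lemma ode_solve_aux (T a c q : ℝ) (h1q : 0 < 1 - q) (hT : 0 ≤ T) (g : ℝ → ℝ)
    (hg : ∀ t ∈ Set.Icc (0:ℝ) T, HasDerivAt g (a - c * Real.exp (g t / (q - 1))) t)
    (hgT : g T = 0) :
    ∀ t ∈ Set.Icc (0:ℝ) T,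
      a * Real.exp (g t / (1 - q)) = c + (a - c) * Real.exp ((a / (1 - q)) * (t - T)) := by
  have h1q' : (1 - q) ≠ 0 := ne_of_gt h1q
  set b : ℝ := a / (1 - q) with hb
  have hneg : ∀ s : ℝ, s / (q - 1) = -(s / (1 - q)) := by
    intro s; rw [show q - 1 = -(1 - q) by ring, div_neg]
  -- derivative of v = exp(g/(1-q))
  have hv : ∀ t ∈ Set.Icc (0:ℝ) T,
      HasDerivAt (fun u => Real.exp (g u / (1 - q)))
        ((a * Real.exp (g t / (1 - q)) - c) / (1 - q)) t := by
    intro t ht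
    have h1 := ((hg t ht).div_const (1 - q)).exp
    convert h1 using 1
    rw [hneg (g t), Real.exp_neg]
    have hE := Real.exp_ne_zero (g t / (1 - q))
    field_simp
  -- w = (a v - c) e^{-bt} has zero derivative
  set w : ℝ → ℝ := fun u => (a * Real.exp (g u / (1 - q)) - c) * Real.exp (-(b * u)) with hw
  have hwd : ∀ t ∈ Set.Icc (0:ℝ) T, HasDerivAt w 0 t := by
    intro t ht
    have h2 : HasDerivAt (fun u : ℝ => Real.exp (-(b * u))) (Real.exp (-(b * t)) * (-b)) t := by
      have h3 : HasDerivAt (fun u : ℝ => -(b * u)) (-b) t := by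
        simpa using (hasDerivAt_id t).const_mul (-b)
      simpa using h3.exp
    have h4 := (((hv t ht).const_mul a).sub_const c).mul h2
    refine h4.congr_deriv (Eq.symm ?_)
    rw [hb]
    field_simp
    ring
  have hcw : ContinuousOn w (Set.Icc 0 T) := fun t ht =>
    (hwd t ht).continuousAt.continuousWithinAt
  have hconst := constant_of_has_deriv_right_zero hcw
    (fun t ht => (hwd t (Set.Ico_subset_Icc_self ht)).hasDerivWithinAt)
  intro t ht
  have h5 : w t = w T := by
    rw [hconst t ht, hconst T (Set.right_mem_Icc.2 hT)]
  have h6 : w T = (a - c) * Real.exp (-(b * T)) := by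
    simp [hw, hgT]
  have h7 : (a * Real.exp (g t / (1 - q)) - c) * Real.exp (-(b * t))
      = (a - c) * Real.exp (-(b * T)) := by
    rw [← h6]; exact h5
  have h8 : a * Real.exp (g t / (1 - q)) - c = (a - c) * Real.exp (b * (t - T)) := by
    apply mul_right_cancel₀ (Real.exp_ne_zero (-(b * t)))
    rw [h7, mul_assoc, ← Real.exp_add]
    ring_nf
  rw [hb] at h8
  linarith

set_option maxHeartbeats 1000000 in

/-- Second monotonicity case of Theorem 3.5 (power utility with consumption):
when ρ − max(pK₁,pK₂) > (1−p)λ^{1/(1−p)}, the data asset price first increases and then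
decreases, and the turning point is positive whenever the horizon T exceeds some T̄
depending only on p, λ, ρ, K₁, K₂. -/
theorem stmt_12 (p lam ρ x K₁ K₂ : ℝ)
    (hp : p < 1) (hp0 : p ≠ 0) (hlam : 0 < lam) (hx : 0 < x) (hK : K₁ < K₂)
    (hbig : (1 - p) * lam ^ (1 / (1 - p)) < ρ - max (p * K₁) (p * K₂)) :
    ∃ Tbar > (0:ℝ), ∀ T : ℝ, 0 < T → ∀ g1 g2 : ℝ → ℝ,
      (∀ t ∈ Set.Icc (0:ℝ) T,
        HasDerivAt g1
          (-(p * K₁ + (1 - p) * lam ^ (1 / (1 - p)) * Real.exp (g1 t / (p - 1)) - ρ)) t) →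
      g1 T = 0 →
      (∀ t ∈ Set.Icc (0:ℝ) T,
        HasDerivAt g2
          (-(p * K₂ + (1 - p) * lam ^ (1 / (1 - p)) * Real.exp (g2 t / (p - 1)) - ρ)) t) →
      g2 T = 0 →
      ∃ Tstar ∈ Set.Icc (0:ℝ) T,
        StrictMonoOn (fun t => x * (1 - Real.exp ((g1 t - g2 t) / p))) (Set.Icc 0 Tstar) ∧
        StrictAntiOn (fun t => x * (1 - Real.exp ((g1 t - g2 t) / p))) (Set.Icc Tstar T) ∧
        (Tbar ≤ T → 0 < Tstar) := by
  have h1p : 0 < 1 - p := by linarith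
  set c : ℝ := (1 - p) * lam ^ (1 / (1 - p)) with hc
  have hcpos : 0 < c := mul_pos h1p (Real.rpow_pos_of_pos hlam _)
  set a₁ : ℝ := ρ - p * K₁ with ha₁
  set a₂ : ℝ := ρ - p * K₂ with ha₂
  have hca₁ : c < a₁ := by
    have h := le_max_left (p * K₁) (p * K₂)
    rw [ha₁]; linarith
  have hca₂ : c < a₂ := by
    have h := le_max_right (p * K₁) (p * K₂)
    rw [ha₂]; linarith
  have ha₁pos : 0 < a₁ := hcpos.trans hca₁
  have ha₂pos : 0 < a₂ := hcpos.trans hca₂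
  have hane₁ : ρ - p * K₁ ≠ 0 := by rw [← ha₁]; exact ne_of_gt ha₁pos
  have hane₂ : ρ - p * K₂ ≠ 0 := by rw [← ha₂]; exact ne_of_gt ha₂pos
  set b₁ : ℝ := a₁ / (1 - p) with hb₁
  set b₂ : ℝ := a₂ / (1 - p) with hb₂
  have hb₁pos : 0 < b₁ := div_pos ha₁pos h1p
  have hb₂pos : 0 < b₂ := div_pos ha₂pos h1p
  set Q : ℝ := (K₂ - K₁) * ((a₁ - c) * (a₂ - c)) with hQdef
  have hQpos : 0 < Q := by
    rw [hQdef]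
    exact mul_pos (sub_pos.2 hK) (mul_pos (sub_pos.2 hca₁) (sub_pos.2 hca₂))
  set A₁ : ℝ := a₁ * (a₁ - c) with hA₁
  set A₂ : ℝ := a₂ * (a₂ - c) with hA₂
  clear_value c a₁ a₂ b₁ b₂ Q A₁ A₂
  have hA₁pos : 0 < A₁ := by rw [hA₁]; exact mul_pos ha₁pos (sub_pos.2 hca₁)
  have hA₂pos : 0 < A₂ := by rw [hA₂]; exact mul_pos ha₂pos (sub_pos.2 hca₂)
  -- positivity at s = 0 of the single-crossing function
  have hφ0pos : 0 < Q + (c/p) * (A₁ * Real.exp (b₂*0) - A₂ * Real.exp (b₁*0)) := by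
    have hφ0 : Q + (c/p) * (A₁ * Real.exp (b₂*0) - A₂ * Real.exp (b₁*0))
        = (K₂ - K₁) * (a₁ * a₂) := by
      simp only [mul_zero, Real.exp_zero, mul_one, hQdef, hA₁, hA₂, ha₁, ha₂]
      field_simp
      ring
    rw [hφ0]
    exact mul_pos (sub_pos.2 hK) (mul_pos ha₁pos ha₂pos)
  have key : ∃ s₀ > (0:ℝ),
      (∀ s, 0 ≤ s → s < s₀ →
        0 < Q + (c/p) * (A₁ * Real.exp (b₂*s) - A₂ * Real.exp (b₁*s))) ∧
      (∀ s, s₀ < s →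
        Q + (c/p) * (A₁ * Real.exp (b₂*s) - A₂ * Real.exp (b₁*s)) < 0) := by
    rcases hp0.lt_or_gt with hpneg | hppos
    · -- p < 0
      have hk : 0 < b₂ - b₁ := by
        have h : a₂ - a₁ = p * (K₁ - K₂) := by rw [ha₁, ha₂]; ring
        rw [hb₁, hb₂, div_sub_div_same, h]
        exact div_pos (by nlinarith) h1p
      have hu : (c/p) * A₁ < 0 :=
        mul_neg_of_neg_of_pos (div_neg_of_pos_of_neg hcpos hpneg) hA₁pos
      have hrep : ∀ s, Q + (c/p) * (A₁ * Real.exp (b₂*s) - A₂ * Real.exp (b₁*s))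
          = Q + Real.exp (b₁*s) * (((c/p)*A₁) * Real.exp ((b₂-b₁)*s) + (-((c/p)*A₂))) := by
        intro s
        have he : Real.exp (b₁*s) * Real.exp ((b₂-b₁)*s) = Real.exp (b₂*s) := by
          rw [← Real.exp_add]; ring_nf
        linear_combination (-((c/p)*A₁)) * he
      obtain ⟨s₀, hs₀, hposr, hnegr⟩ :=
        crossing_aux Q b₁ ((c/p)*A₁) (b₂-b₁) (-((c/p)*A₂)) hQpos hb₁pos hu hk
          (by rw [← hrep 0]; exact hφ0pos)
      exact ⟨s₀, hs₀, fun s h1 h2 => by rw [hrep s]; exact hposr s h1 h2,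
        fun s h => by rw [hrep s]; exact hnegr s h⟩
    · -- 0 < p
      have hk : 0 < b₁ - b₂ := by
        have h : a₁ - a₂ = p * (K₂ - K₁) := by rw [ha₁, ha₂]; ring
        rw [hb₁, hb₂, div_sub_div_same, h]
        exact div_pos (by nlinarith) h1p
      have hu : -((c/p) * A₂) < 0 :=
        neg_neg_iff_pos.2 (mul_pos (div_pos hcpos hppos) hA₂pos)
      have hrep : ∀ s, Q + (c/p) * (A₁ * Real.exp (b₂*s) - A₂ * Real.exp (b₁*s))
          = Q + Real.exp (b₂*s) * ((-((c/p)*A₂)) * Real.exp ((b₁-b₂)*s) + ((c/p)*A₁)) := by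
        intro s
        have he : Real.exp (b₂*s) * Real.exp ((b₁-b₂)*s) = Real.exp (b₁*s) := by
          rw [← Real.exp_add]; ring_nf
        linear_combination ((c/p)*A₂) * he
      obtain ⟨s₀, hs₀, hposr, hnegr⟩ :=
        crossing_aux Q b₂ (-((c/p)*A₂)) (b₁-b₂) ((c/p)*A₁) hQpos hb₂pos hu hk
          (by rw [← hrep 0]; exact hφ0pos)
      exact ⟨s₀, hs₀, fun s h1 h2 => by rw [hrep s]; exact hposr s h1 h2,
        fun s h => by rw [hrep s]; exact hnegr s h⟩
  obtain ⟨s₀, hs₀pos, hφpos, hφneg⟩ := key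
  refine ⟨s₀ + 1, by linarith, ?_⟩
  intro T hT g1 g2 hg1 hg1T hg2 hg2T
  -- solve the ODEs explicitly
  have hg1' : ∀ t ∈ Set.Icc (0:ℝ) T,
      HasDerivAt g1 (a₁ - c * Real.exp (g1 t / (p-1))) t := by
    intro t ht
    have h := hg1 t ht
    convert h using 1
    rw [ha₁]; ring
  have hg2' : ∀ t ∈ Set.Icc (0:ℝ) T,
      HasDerivAt g2 (a₂ - c * Real.exp (g2 t / (p-1))) t := by
    intro t ht
    have h := hg2 t ht
    convert h using 1
    rw [ha₂]; ring
  have hsol1 := ode_solve_aux T a₁ c p h1p hT.le g1 hg1' hg1T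
  have hsol2 := ode_solve_aux T a₂ c p h1p hT.le g2 hg2' hg2T
  rw [← hb₁] at hsol1
  rw [← hb₂] at hsol2
  -- the key identity for the derivative sign
  have hkey : ∀ t ∈ Set.Icc (0:ℝ) T,
      ((-(p*K₁ + c * Real.exp (g1 t / (p-1)) - ρ)) -
        (-(p*K₂ + c * Real.exp (g2 t / (p-1)) - ρ)))/p
      = (Q + (c/p) * (A₁ * Real.exp (b₂*(T-t)) - A₂ * Real.exp (b₁*(T-t))))
        * ((Real.exp (b₁*(t-T)) * Real.exp (b₂*(t-T)))
           / ((a₁*a₂) * (Real.exp (g1 t/(1-p)) * Real.exp (g2 t/(1-p))))) := by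
    intro t ht
    have h1 := hsol1 t ht
    have h2 := hsol2 t ht
    have hV₁ : Real.exp (g1 t/(1-p)) = (c + (a₁-c) * Real.exp (b₁*(t-T)))/a₁ := by
      rw [eq_div_iff (ne_of_gt ha₁pos)]; linarith
    have hV₂ : Real.exp (g2 t/(1-p)) = (c + (a₂-c) * Real.exp (b₂*(t-T)))/a₂ := by
      rw [eq_div_iff (ne_of_gt ha₂pos)]; linarith
    have he1 : Real.exp (g1 t/(p-1)) = (Real.exp (g1 t/(1-p)))⁻¹ := by
      rw [show g1 t/(p-1) = -(g1 t/(1-p)) by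
        rw [show p-1 = -(1-p) by ring, div_neg], Real.exp_neg]
    have he2 : Real.exp (g2 t/(p-1)) = (Real.exp (g2 t/(1-p)))⁻¹ := by
      rw [show g2 t/(p-1) = -(g2 t/(1-p)) by
        rw [show p-1 = -(1-p) by ring, div_neg], Real.exp_neg]
    have hf1 : Real.exp (b₁*(T-t)) = (Real.exp (b₁*(t-T)))⁻¹ := by
      rw [show b₁*(T-t) = -(b₁*(t-T)) by ring, Real.exp_neg]
    have hf2 : Real.exp (b₂*(T-t)) = (Real.exp (b₂*(t-T)))⁻¹ := by
      rw [show b₂*(T-t) = -(b₂*(t-T)) by ring, Real.exp_neg]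
    have hE₁ := Real.exp_ne_zero (b₁*(t-T))
    have hE₂ := Real.exp_ne_zero (b₂*(t-T))
    have hcE₁ : c + (a₁-c) * Real.exp (b₁*(t-T)) ≠ 0 := by
      have := Real.exp_pos (b₁*(t-T))
      nlinarith [sub_pos.2 hca₁]
    have hcE₂ : c + (a₂-c) * Real.exp (b₂*(t-T)) ≠ 0 := by
      have := Real.exp_pos (b₂*(t-T))
      nlinarith [sub_pos.2 hca₂]
    have hK1 : K₁ = (ρ - a₁)/p := by rw [ha₁]; field_simp; ring
    have hK2 : K₂ = (ρ - a₂)/p := by rw [ha₂]; field_simp; ring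
    rw [he1, he2, hf1, hf2, hV₁, hV₂, hQdef, hA₁, hA₂, hK1, hK2]
    generalize Real.exp (b₁*(t-T)) = E₁ at hE₁ hcE₁ ⊢
    generalize Real.exp (b₂*(t-T)) = E₂ at hE₂ hcE₂ ⊢
    field_simp
    ring
  -- derivative of the price function
  have hP : ∀ t ∈ Set.Icc (0:ℝ) T,
      HasDerivAt (fun u => x * (1 - Real.exp ((g1 u - g2 u)/p)))
        (x * (-(Real.exp ((g1 t - g2 t)/p) *
          (((-(p*K₁ + c * Real.exp (g1 t / (p-1)) - ρ)) -
            (-(p*K₂ + c * Real.exp (g2 t / (p-1)) - ρ)))/p)))) t := by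
    intro t ht
    exact ((((hg1 t ht).sub (hg2 t ht)).div_const p).exp.const_sub 1).const_mul x
  have hmul : ∀ t : ℝ, 0 < (Real.exp (b₁*(t-T)) * Real.exp (b₂*(t-T)))
      / ((a₁*a₂) * (Real.exp (g1 t/(1-p)) * Real.exp (g2 t/(1-p)))) := fun t =>
    div_pos (mul_pos (Real.exp_pos _) (Real.exp_pos _))
      (mul_pos (mul_pos ha₁pos ha₂pos) (mul_pos (Real.exp_pos _) (Real.exp_pos _)))
  set Tstar : ℝ := max 0 (T - s₀) with hTs
  clear_value Tstar
  have hTstarIcc : Tstar ∈ Set.Icc (0:ℝ) T := by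
    rw [hTs]
    exact ⟨le_max_left _ _, max_le hT.le (by linarith)⟩
  refine ⟨Tstar, hTstarIcc, ?_, ?_, ?_⟩
  · -- strictly increasing on [0, Tstar]
    apply strictMonoOn_of_deriv_pos (convex_Icc 0 Tstar)
    · intro t ht
      exact ((hP t ⟨ht.1, ht.2.trans hTstarIcc.2⟩).continuousAt).continuousWithinAt
    · intro t ht
      rw [interior_Icc] at ht
      have h10 : 0 < T - s₀ := by
        by_contra hcon
        push_neg at hcon
        have hz : Tstar = 0 := by rw [hTs]; exact max_eq_left hcon
        rw [hz] at ht
        linarith [ht.1, ht.2]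
      have hTsr : Tstar = T - s₀ := by rw [hTs]; exact max_eq_right h10.le
      have htI : t ∈ Set.Icc (0:ℝ) T := by
        rw [hTsr] at ht
        exact ⟨ht.1.le, by linarith [ht.2]⟩
      rw [(hP t htI).deriv]
      have hφn := hφneg (T - t) (by rw [hTsr] at ht; linarith [ht.2])
      have hD : ((-(p*K₁ + c * Real.exp (g1 t / (p-1)) - ρ)) -
          (-(p*K₂ + c * Real.exp (g2 t / (p-1)) - ρ)))/p < 0 := by
        rw [hkey t htI]
        exact mul_neg_of_neg_of_pos hφn (hmul t)
      nlinarith [mul_pos (mul_pos hx (Real.exp_pos ((g1 t - g2 t)/p))) (neg_pos.2 hD)]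
  · -- strictly decreasing on [Tstar, T]
    apply strictAntiOn_of_deriv_neg (convex_Icc Tstar T)
    · intro t ht
      exact ((hP t ⟨hTstarIcc.1.trans ht.1, ht.2⟩).continuousAt).continuousWithinAt
    · intro t ht
      rw [interior_Icc] at ht
      have htI : t ∈ Set.Icc (0:ℝ) T := ⟨le_trans hTstarIcc.1 ht.1.le, ht.2.le⟩
      rw [(hP t htI).deriv]
      have h11 : T - t < s₀ := by
        have h := le_max_right (0:ℝ) (T - s₀)
        rw [← hTs] at h
        linarith [ht.1]
      have hφp := hφpos (T - t) (by linarith [ht.2]) h11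
      have hD : 0 < ((-(p*K₁ + c * Real.exp (g1 t / (p-1)) - ρ)) -
          (-(p*K₂ + c * Real.exp (g2 t / (p-1)) - ρ)))/p := by
        rw [hkey t htI]
        exact mul_pos hφp (hmul t)
      nlinarith [mul_pos (mul_pos hx (Real.exp_pos ((g1 t - g2 t)/p))) hD]
  · intro hTbar
    rw [hTs]
    exact lt_max_of_lt_right (by linarith)
end

section
/- Let p ∈ (−∞,1), and let R, r, π̲, π̄, μ̲, μ̄, σ̲, σ̄ be real numbers with R ≥ r, π̲ ≤ 0, π̄ ≥ 1, μ̲ ≤ μ̄ and 0 < σ̲ ≤ σ̄. Define F¹(x_π; x_μ, x_Σ) = ((p−1)/2)·x_Σ·x_π² + x_μ·x_π + r·(1−x_π)⁺ − R·(1−x_π)⁻, and K = sup_{x_π ∈ [π̲, π̄]} inf_{(x_μ, x_Σ) ∈ [μ̲, μ̄] × [σ̲², σ̄²]} F¹(x_π; x_μ, x_Σ). Set β₁ = (μ̲ − R)/((1−p)σ̄²), β₂ = (μ̲ − r)/((1−p)σ̄²) and β₃ = (μ̄ − r)/((1−p)σ̄²). Then: (1) if β₁ ≥ π̄ then K = ((p−1)/2)π̄²σ̄²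 + (μ̲−R)π̄ + R; (2) if 1 ≤ β₁ ≤ π̄ then K = (μ̲−R)²/(2(1−p)σ̄²) + R; (3) if β₁ ≤ 1 ≤ β₂ then K = ((p−1)/2)σ̄² + μ̲; (4) if 0 ≤ β₂ ≤ 1 then K = (μ̲−r)²/(2(1−p)σ̄²) + r; (5) if β₂ ≤ 0 ≤ β₃ then K = r; (6) if π̲ ≤ β₃ ≤ 0 then K = (μ̄−r)²/(2(1−p)σ̄²) + r; (7) if β₃ ≤ π̲ then K = ((p−1)/2)π̲²σ̄² + (μ̄−r)π̲ + r. -/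
set_option maxHeartbeats 2000000 in
/-- Theorem 4.1: the explicit Investment Opportunity Index for a single risky asset with
rectangular ambiguity set, portfolio constraint interval [π̲,π̄], lending rate r and
borrowing rate R ≥ r. -/
theorem stmt_13 (p R r πl πu μl μu σl σu K : ℝ)
    (hp : p < 1) (hRr : r ≤ R) (hπl : πl ≤ 0) (hπu : 1 ≤ πu)
    (hμ : μl ≤ μu) (hσl : 0 < σl) (hσ : σl ≤ σu)
    (hK : K = sSup ((fun xπ => sInf ((fun q : ℝ × ℝ =>
        ((p - 1) / 2) * q.2 * xπ ^ 2 + q.1 * xπ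
          + r * max (1 - xπ) 0 - R * max (-(1 - xπ)) 0) ''
        (Set.Icc μl μu ×ˢ Set.Icc (σl ^ 2) (σu ^ 2)))) '' Set.Icc πl πu)) :
    (πu ≤ (μl - R) / ((1 - p) * σu ^ 2) →
      K = ((p - 1) / 2) * πu ^ 2 * σu ^ 2 + (μl - R) * πu + R) ∧
    (1 ≤ (μl - R) / ((1 - p) * σu ^ 2) ∧ (μl - R) / ((1 - p) * σu ^ 2) ≤ πu →
      K = (μl - R) ^ 2 / (2 * (1 - p) * σu ^ 2) + R) ∧
    ((μl - R) / ((1 - p) * σu ^ 2) ≤ 1 ∧ 1 ≤ (μl - r) / ((1 - p) * σu ^ 2) →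
      K = ((p - 1) / 2) * σu ^ 2 + μl) ∧
    (0 ≤ (μl - r) / ((1 - p) * σu ^ 2) ∧ (μl - r) / ((1 - p) * σu ^ 2) ≤ 1 →
      K = (μl - r) ^ 2 / (2 * (1 - p) * σu ^ 2) + r) ∧
    ((μl - r) / ((1 - p) * σu ^ 2) ≤ 0 ∧ 0 ≤ (μu - r) / ((1 - p) * σu ^ 2) →
      K = r) ∧
    (πl ≤ (μu - r) / ((1 - p) * σu ^ 2) ∧ (μu - r) / ((1 - p) * σu ^ 2) ≤ 0 →
      K = (μu - r) ^ 2 / (2 * (1 - p) * σu ^ 2) + r) ∧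
    ((μu - r) / ((1 - p) * σu ^ 2) ≤ πl →
      K = ((p - 1) / 2) * πl ^ 2 * σu ^ 2 + (μu - r) * πl + r) := by
  have hσu : 0 < σu := lt_of_lt_of_le hσl hσ
  have h1p : (0:ℝ) < 1 - p := by linarith
  have hc : 0 < (1 - p) * σu ^ 2 := by positivity
  have hσσ : σl ^ 2 ≤ σu ^ 2 := by nlinarith
  -- Step 1: the inner infimum
  have hinf : ∀ x : ℝ, sInf ((fun q : ℝ × ℝ =>
        ((p - 1) / 2) * q.2 * x ^ 2 + q.1 * x
          + r * max (1 - x) 0 - R * max (-(1 - x)) 0) ''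
        (Set.Icc μl μu ×ˢ Set.Icc (σl ^ 2) (σu ^ 2)))
      = ((p - 1) / 2) * σu ^ 2 * x ^ 2 + min (μl * x) (μu * x)
          + min (r * (1 - x)) (R * (1 - x)) := by
    intro x
    have hrR : r * max (1 - x) 0 - R * max (-(1 - x)) 0
        = min (r * (1 - x)) (R * (1 - x)) := by
      rcases le_total (1 - x) 0 with h | h
      · rw [max_eq_right h, max_eq_left (by linarith : (0:ℝ) ≤ -(1 - x)),
          min_eq_right (by nlinarith : R * (1 - x) ≤ r * (1 - x))]
        ring
      · rw [max_eq_left h, max_eq_right (by linarith : -(1 - x) ≤ 0),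
          min_eq_left (by nlinarith : r * (1 - x) ≤ R * (1 - x))]
        ring
    apply IsLeast.csInf_eq
    constructor
    · rcases le_total 0 x with h | h
      · refine ⟨(μl, σu ^ 2), ⟨⟨le_refl _, hμ⟩, hσσ, le_refl _⟩, ?_⟩
        have e1 : min (μl * x) (μu * x) = μl * x :=
          min_eq_left (mul_le_mul_of_nonneg_right hμ h)
        simp only
        linarith [hrR, e1]
      · refine ⟨(μu, σu ^ 2), ⟨⟨hμ, le_refl _⟩, hσσ, le_refl _⟩, ?_⟩
        have e1 : min (μl * x) (μu * x) = μu * x :=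
          min_eq_right (mul_le_mul_of_nonpos_right hμ h)
        simp only
        linarith [hrR, e1]
    · rintro y ⟨⟨xμ, xS⟩, ⟨⟨ha1, ha2⟩, hb1, hb2⟩, rfl⟩
      simp only
      have h1 : min (μl * x) (μu * x) ≤ xμ * x := by
        rcases le_total 0 x with h | h
        · exact le_trans (min_le_left _ _) (mul_le_mul_of_nonneg_right ha1 h)
        · exact le_trans (min_le_right _ _) (mul_le_mul_of_nonpos_right ha2 h)
      have h2 : ((p - 1) / 2) * σu ^ 2 * x ^ 2 ≤ ((p - 1) / 2) * xS * x ^ 2 := by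
        nlinarith [mul_nonneg (mul_nonneg h1p.le (sub_nonneg.2 hb2)) (sq_nonneg x)]
      linarith [hrR, h1, h2]
  have himg : K = sSup ((fun x => ((p - 1) / 2) * σu ^ 2 * x ^ 2 + min (μl * x) (μu * x)
      + min (r * (1 - x)) (R * (1 - x))) '' Set.Icc πl πu) := by
    rw [hK]
    exact congrArg sSup (Set.image_congr fun x _ => hinf x)
  refine ⟨?_, ?_, ?_, ?_, ?_, ?_, ?_⟩
  -- Case 1
  · intro h
    have key : πu * ((1 - p) * σu ^ 2) ≤ μl - R := (le_div_iff₀ hc).mp h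
    rw [himg]
    apply IsGreatest.csSup_eq
    constructor
    · refine ⟨πu, ⟨by linarith, le_refl _⟩, ?_⟩
      have e1 : min (μl * πu) (μu * πu) = μl * πu :=
        min_eq_left (mul_le_mul_of_nonneg_right hμ (by linarith))
      have e2 : min (r * (1 - πu)) (R * (1 - πu)) = R * (1 - πu) :=
        min_eq_right (mul_le_mul_of_nonpos_right hRr (by linarith))
      simp only [e1, e2]
      ring
    · rintro y ⟨x, ⟨hx1, hx2⟩, rfl⟩
      simp only
      nlinarith [min_le_left (μl * x) (μu * x), min_le_right (r * (1 - x)) (R * (1 - x)),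
        mul_nonneg (sub_nonneg.2 hx2) (by linarith : (0:ℝ) ≤ μl - R - πu * ((1 - p) * σu ^ 2)),
        mul_nonneg hc.le (sq_nonneg (πu - x))]
  -- Case 2
  · rintro ⟨h1, h2⟩
    set b := (μl - R) / ((1 - p) * σu ^ 2) with hbdef
    have key : (1 - p) * σu ^ 2 * b = μl - R := by
      rw [hbdef]; exact mul_div_cancel₀ _ hc.ne'
    have h2c : (0:ℝ) < 2 * (1 - p) * σu ^ 2 := by nlinarith [hc]
    have hval : (μl - R) ^ 2 / (2 * (1 - p) * σu ^ 2) = (1 - p) * σu ^ 2 * b ^ 2 / 2 := by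
      rw [← key, div_eq_iff h2c.ne']
      field_simp
    rw [himg]
    apply IsGreatest.csSup_eq
    constructor
    · refine ⟨b, ⟨by linarith, h2⟩, ?_⟩
      have e1 : min (μl * b) (μu * b) = μl * b :=
        min_eq_left (mul_le_mul_of_nonneg_right hμ (by linarith))
      have e2 : min (r * (1 - b)) (R * (1 - b)) = R * (1 - b) :=
        min_eq_right (mul_le_mul_of_nonpos_right hRr (by linarith))
      simp only [e1, e2, hval]
      linear_combination (-b) * key
    · rintro y ⟨x, ⟨hx1, hx2⟩, rfl⟩
      simp only
      rw [hval]
      nlinarith [min_le_left (μl * x) (μu * x), min_le_right (r * (1 - x)) (R * (1 - x)),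
        key, mul_nonneg hc.le (sq_nonneg (b - x))]
  -- Case 3
  · rintro ⟨h1, h2⟩
    have key1 : μl - R ≤ 1 * ((1 - p) * σu ^ 2) := (div_le_iff₀ hc).mp h1
    have key2 : 1 * ((1 - p) * σu ^ 2) ≤ μl - r := (le_div_iff₀ hc).mp h2
    rw [himg]
    apply IsGreatest.csSup_eq
    constructor
    · refine ⟨1, ⟨by linarith, hπu⟩, ?_⟩
      have e1 : min (μl * 1) (μu * 1) = μl * 1 := min_eq_left (by linarith)
      have e2 : min (r * (1 - 1)) (R * (1 - 1)) = r * (1 - 1) := min_eq_left (by norm_num)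
      simp only [e1, e2]
      ring
    · rintro y ⟨x, ⟨hx1, hx2⟩, rfl⟩
      simp only
      rcases le_total x 1 with hx | hx
      · nlinarith [min_le_left (μl * x) (μu * x), min_le_left (r * (1 - x)) (R * (1 - x)),
          mul_nonneg (sub_nonneg.2 hx) (by linarith : (0:ℝ) ≤ μl - r - (1 - p) * σu ^ 2),
          mul_nonneg hc.le (sq_nonneg (1 - x))]
      · nlinarith [min_le_left (μl * x) (μu * x), min_le_right (r * (1 - x)) (R * (1 - x)),
          mul_nonneg (sub_nonneg.2 hx) (by linarith : (0:ℝ) ≤ (1 - p) * σu ^ 2 - (μl - R)),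
          mul_nonneg hc.le (sq_nonneg (x - 1))]
  -- Case 4
  · rintro ⟨h1, h2⟩
    set b := (μl - r) / ((1 - p) * σu ^ 2) with hbdef
    have key : (1 - p) * σu ^ 2 * b = μl - r := by
      rw [hbdef]; exact mul_div_cancel₀ _ hc.ne'
    have h2c : (0:ℝ) < 2 * (1 - p) * σu ^ 2 := by nlinarith [hc]
    have hval : (μl - r) ^ 2 / (2 * (1 - p) * σu ^ 2) = (1 - p) * σu ^ 2 * b ^ 2 / 2 := by
      rw [← key, div_eq_iff h2c.ne']
      field_simp
    rw [himg]
    apply IsGreatest.csSup_eq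
    constructor
    · refine ⟨b, ⟨by linarith, by linarith⟩, ?_⟩
      have e1 : min (μl * b) (μu * b) = μl * b :=
        min_eq_left (mul_le_mul_of_nonneg_right hμ h1)
      have e2 : min (r * (1 - b)) (R * (1 - b)) = r * (1 - b) :=
        min_eq_left (mul_le_mul_of_nonneg_right hRr (by linarith))
      simp only [e1, e2, hval]
      linear_combination (-b) * key
    · rintro y ⟨x, ⟨hx1, hx2⟩, rfl⟩
      simp only
      rw [hval]
      nlinarith [min_le_left (μl * x) (μu * x), min_le_left (r * (1 - x)) (R * (1 - x)),
        key, mul_nonneg hc.le (sq_nonneg (b - x))]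
  -- Case 5
  · rintro ⟨h1, h2⟩
    have key1 : μl - r ≤ 0 * ((1 - p) * σu ^ 2) := (div_le_iff₀ hc).mp h1
    have key2 : 0 * ((1 - p) * σu ^ 2) ≤ μu - r := (le_div_iff₀ hc).mp h2
    rw [himg]
    apply IsGreatest.csSup_eq
    constructor
    · refine ⟨0, ⟨hπl, by linarith⟩, ?_⟩
      have e1 : min (μl * 0) (μu * 0) = μl * 0 := min_eq_left (by norm_num)
      have e2 : min (r * (1 - 0)) (R * (1 - 0)) = r * (1 - 0) := min_eq_left (by linarith)
      simp only [e1, e2]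
      ring
    · rintro y ⟨x, ⟨hx1, hx2⟩, rfl⟩
      simp only
      rcases le_total 0 x with hx | hx
      · nlinarith [min_le_left (μl * x) (μu * x), min_le_left (r * (1 - x)) (R * (1 - x)),
          mul_nonneg hx (by linarith : (0:ℝ) ≤ r - μl),
          mul_nonneg hc.le (sq_nonneg x)]
      · nlinarith [min_le_right (μl * x) (μu * x), min_le_left (r * (1 - x)) (R * (1 - x)),
          mul_nonneg (by linarith : (0:ℝ) ≤ -x) (by linarith : (0:ℝ) ≤ μu - r),
          mul_nonneg hc.le (sq_nonneg x)]
  -- Case 6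
  · rintro ⟨h1, h2⟩
    set b := (μu - r) / ((1 - p) * σu ^ 2) with hbdef
    have key : (1 - p) * σu ^ 2 * b = μu - r := by
      rw [hbdef]; exact mul_div_cancel₀ _ hc.ne'
    have h2c : (0:ℝ) < 2 * (1 - p) * σu ^ 2 := by nlinarith [hc]
    have hval : (μu - r) ^ 2 / (2 * (1 - p) * σu ^ 2) = (1 - p) * σu ^ 2 * b ^ 2 / 2 := by
      rw [← key, div_eq_iff h2c.ne']
      field_simp
    rw [himg]
    apply IsGreatest.csSup_eq
    constructor
    · refine ⟨b, ⟨h1, by linarith⟩, ?_⟩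
      have e1 : min (μl * b) (μu * b) = μu * b :=
        min_eq_right (mul_le_mul_of_nonpos_right hμ h2)
      have e2 : min (r * (1 - b)) (R * (1 - b)) = r * (1 - b) :=
        min_eq_left (mul_le_mul_of_nonneg_right hRr (by linarith))
      simp only [e1, e2, hval]
      linear_combination (-b) * key
    · rintro y ⟨x, ⟨hx1, hx2⟩, rfl⟩
      simp only
      rw [hval]
      nlinarith [min_le_right (μl * x) (μu * x), min_le_left (r * (1 - x)) (R * (1 - x)),
        key, mul_nonneg hc.le (sq_nonneg (b - x))]
  -- Case 7
  · intro h
    have key : μu - r ≤ πl * ((1 - p) * σu ^ 2) := (div_le_iff₀ hc).mp h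
    rw [himg]
    apply IsGreatest.csSup_eq
    constructor
    · refine ⟨πl, ⟨le_refl _, by linarith⟩, ?_⟩
      have e1 : min (μl * πl) (μu * πl) = μu * πl :=
        min_eq_right (mul_le_mul_of_nonpos_right hμ hπl)
      have e2 : min (r * (1 - πl)) (R * (1 - πl)) = r * (1 - πl) :=
        min_eq_left (mul_le_mul_of_nonneg_right hRr (by linarith))
      simp only [e1, e2]
      ring
    · rintro y ⟨x, ⟨hx1, hx2⟩, rfl⟩
      simp only
      nlinarith [min_le_right (μl * x) (μu * x), min_le_left (r * (1 - x)) (R * (1 - x)),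
        mul_nonneg (sub_nonneg.2 hx1) (by linarith : (0:ℝ) ≤ πl * ((1 - p) * σu ^ 2) - (μu - r)),
        mul_nonneg hc.le (sq_nonneg (πl - x))]
end

section
/- Let p ∈ (−∞,1), r ∈ ℝ, μ̲ ∈ ℝ, σ̲ > 0, k > 0, 0 < q < 1 and ᾱ > 0. Define K = sup_{x_π ∈ ℝ} inf_{α ∈ [0,ᾱ]} [ ((p−1)/2)·(σ̲² + k·α^q)·x_π² + (μ̲ + α)·x_π + r·(1 − x_π) ]. Define α* as follows: α* = r − μ̲ if −ᾱ < μ̲ − r ≤ 0; α* = α̂ if 0 < μ̲ − r < [2σ̲²·ᾱ^{1−q} + k(2−q)·ᾱ]/(kq), where α̂ is the unique solution in (0, +∞) of the equation 2σ̲² + k(2−q)·α^q − kq·(μ̲ − r)·α^{q−1} = 0; and α* = ᾱ in all other cases. Set μ* = μ̲ + α* and σ*² = σ̲² + k·(α*)^q. Then K = (μ* − r)²/(2(1−p)·σ*²) + r. -/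
/-- Concavity (tangent line) inequality for `x ^ q`, `0 < q < 1`. -/
lemma stmt_14_tangent (q : ℝ) (hq0 : 0 < q) (hq1 : q < 1) {s a : ℝ} (hs : 0 < s) (ha : 0 ≤ a) :
    a ^ q - s ^ q ≤ q * s ^ (q - 1) * (a - s) := by
  have hsq : (0:ℝ) < s ^ q := Real.rpow_pos_of_pos hs q
  have h := rpow_one_add_le_one_add_mul_self (s := a / s - 1) (by
    have : 0 ≤ a / s := div_nonneg ha hs.le
    linarith) hq0.le hq1.le
  rw [add_sub_cancel] at h
  rw [Real.div_rpow ha hs.le] at h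
  have h2 : a ^ q ≤ (1 + q * (a / s - 1)) * s ^ q := (div_le_iff₀ hsq).mp h
  have hrw : s ^ (q - 1) = s ^ q / s := by
    rw [Real.rpow_sub hs, Real.rpow_one]
  rw [hrw]
  have heq : (1 + q * (a / s - 1)) * s ^ q = s ^ q + q * (s ^ q / s) * (a - s) := by
    field_simp
  linarith

lemma stmt_14_quad_aux (pp S M r x : ℝ) (hpp : 0 < pp) (hS : 0 < S) :
    -(pp / 2) * S * x ^ 2 + M * x + r * (1 - x) ≤ (M - r) ^ 2 / (2 * pp * S) + r := by
  rw [← sub_le_iff_le_add, le_div_iff₀ (by positivity)]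
  nlinarith [sq_nonneg (pp * S * x - (M - r))]

lemma stmt_14_saddle_aux (pp S M r : ℝ) (hpp : 0 < pp) (hS : 0 < S) :
    -(pp / 2) * S * ((M - r) / (pp * S)) ^ 2 + M * ((M - r) / (pp * S)) +
      r * (1 - (M - r) / (pp * S)) = (M - r) ^ 2 / (2 * pp * S) + r := by
  field_simp
  ring

lemma stmt_14_slope_eq_aux (pp S m k q w : ℝ) (hpp : 0 < pp) (hS : 0 < S)
    (hkey : k * q * m * w = 2 * S) :
    m / (pp * S) = pp / 2 * k * (m / (pp * S)) ^ 2 * q * w := by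
  have h : (pp * S) ≠ 0 := by positivity
  field_simp
  linear_combination (-m) * hkey

lemma stmt_14_slope_le_aux (pp S m k q w : ℝ) (hpp : 0 < pp) (hS : 0 < S) (hm : 0 < m)
    (hkey : 2 * S ≤ k * q * m * w) :
    m / (pp * S) ≤ pp / 2 * k * (m / (pp * S)) ^ 2 * q * w := by
  rw [div_le_iff₀ (by positivity : (0:ℝ) < pp * S), div_pow]
  have hrw : pp / 2 * k * (m ^ 2 / (pp * S) ^ 2) * q * w * (pp * S) =
      k * q * w * m ^ 2 / (2 * S) := by
    field_simp
  rw [hrw, le_div_iff₀ (by positivity : (0:ℝ) < 2 * S)]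
  nlinarith [mul_le_mul_of_nonneg_right hkey hm.le]

set_option maxHeartbeats 1000000 in
/-- Theorem 4.2: the Investment Opportunity Index for a single risky asset with equal
borrowing/lending rates, unconstrained portfolio and a correlated ambiguity set in which
higher drift comes with higher variance in a sub-linear way. -/
theorem stmt_14 (p r μl σl k q αbar K αstar : ℝ)
    (hp : p < 1) (hσl : 0 < σl) (hk : 0 < k) (hq0 : 0 < q) (hq1 : q < 1) (hαbar : 0 < αbar)
    (hK : K = sSup (Set.range (fun xπ : ℝ => sInf ((fun a =>
        ((p - 1) / 2) * (σl ^ 2 + k * a ^ q) * xπ ^ 2 + (μl + a) * xπ + r * (1 - xπ)) ''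
        Set.Icc 0 αbar))))
    (h1 : -αbar < μl - r → μl - r ≤ 0 → αstar = r - μl)
    (h2 : 0 < μl - r →
      μl - r < (2 * σl ^ 2 * αbar ^ (1 - q) + k * (2 - q) * αbar) / (k * q) →
      0 < αstar ∧
        2 * σl ^ 2 + k * (2 - q) * αstar ^ q - k * q * (μl - r) * αstar ^ (q - 1) = 0)
    (h3 : ¬(-αbar < μl - r ∧ μl - r ≤ 0) →
      ¬(0 < μl - r ∧
          μl - r < (2 * σl ^ 2 * αbar ^ (1 - q) + k * (2 - q) * αbar) / (k * q)) →
      αstar = αbar) :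
    K = (μl + αstar - r) ^ 2 / (2 * (1 - p) * (σl ^ 2 + k * αstar ^ q)) + r := by
  have hp1 : (0:ℝ) < 1 - p := by linarith
  have hkq : (0:ℝ) < k * q := by positivity
  obtain ⟨hs0, hsle, hslope⟩ :
      0 ≤ αstar ∧ αstar ≤ αbar ∧
      ((μl + αstar - r) / ((1 - p) * (σl ^ 2 + k * αstar ^ q)) = 0 ∨
        (0 < αstar ∧
          (μl + αstar - r) / ((1 - p) * (σl ^ 2 + k * αstar ^ q)) ≤
            (1 - p) / 2 * k * ((μl + αstar - r) / ((1 - p) * (σl ^ 2 + k * αstar ^ q))) ^ 2 *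
              q * αstar ^ (q - 1) ∧
          ((μl + αstar - r) / ((1 - p) * (σl ^ 2 + k * αstar ^ q)) =
            (1 - p) / 2 * k * ((μl + αstar - r) / ((1 - p) * (σl ^ 2 + k * αstar ^ q))) ^ 2 *
              q * αstar ^ (q - 1) ∨ αstar = αbar))) := by
    by_cases hA : -αbar < μl - r ∧ μl - r ≤ 0
    · have h1' := h1 hA.1 hA.2
      refine ⟨by linarith [hA.2, h1'], by linarith [hA.1, h1'], Or.inl ?_⟩
      have hz : μl + αstar - r = 0 := by rw [h1']; ring
      rw [hz, zero_div]
    by_cases hB : 0 < μl - r ∧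
        μl - r < (2 * σl ^ 2 * αbar ^ (1 - q) + k * (2 - q) * αbar) / (k * q)
    · obtain ⟨hspos, hFOC⟩ := h2 hB.1 hB.2
      have hsq : (0:ℝ) < αstar ^ q := Real.rpow_pos_of_pos hspos q
      have hw : (0:ℝ) < αstar ^ (q - 1) := Real.rpow_pos_of_pos hspos _
      have he : (0:ℝ) < αstar ^ (1 - q) := Real.rpow_pos_of_pos hspos _
      have hmulqq : αstar ^ q * αstar ^ (1 - q) = αstar := by
        rw [← Real.rpow_add hspos]
        norm_num
      have hmulw : αstar ^ (q - 1) * αstar ^ (1 - q) = 1 := by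
        rw [← Real.rpow_add hspos]
        norm_num
      have h' : q - 1 + 1 = q := by ring
      have hws : αstar ^ (q - 1) * αstar = αstar ^ q := by
        rw [← Real.rpow_add_one hspos.ne' (q - 1), h']
      have hB2 : (μl - r) * (k * q) < 2 * σl ^ 2 * αbar ^ (1 - q) + k * (2 - q) * αbar :=
        (lt_div_iff₀ hkq).mp hB.2
      have hFOC' : k * q * (μl - r) = 2 * σl ^ 2 * αstar ^ (1 - q) + k * (2 - q) * αstar := by
        linear_combination (-(αstar ^ (1 - q))) * hFOC + k * (2 - q) * hmulqq -
          k * q * (μl - r) * hmulw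
      have hsle : αstar ≤ αbar := by
        by_contra hgt
        push_neg at hgt
        have he' : αbar ^ (1 - q) ≤ αstar ^ (1 - q) :=
          Real.rpow_le_rpow hαbar.le hgt.le (by linarith)
        have t1 : 2 * σl ^ 2 * αbar ^ (1 - q) ≤ 2 * σl ^ 2 * αstar ^ (1 - q) :=
          mul_le_mul_of_nonneg_left he' (by positivity)
        have t2 : k * (2 - q) * αbar < k * (2 - q) * αstar := by
          have h2q : (0:ℝ) < k * (2 - q) := by nlinarith
          exact (mul_lt_mul_iff_right₀ h2q).mpr hgt
        linarith
      have key2 : k * q * (μl + αstar - r) * αstar ^ (q - 1) =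
          2 * (σl ^ 2 + k * αstar ^ q) := by
        linear_combination (-1 : ℝ) * hFOC + k * q * hws
      have hσpos : (0:ℝ) < σl ^ 2 + k * αstar ^ q := by nlinarith [mul_pos hk hsq]
      have hxseq := stmt_14_slope_eq_aux (1 - p) (σl ^ 2 + k * αstar ^ q)
        (μl + αstar - r) k q (αstar ^ (q - 1)) hp1 hσpos key2
      exact ⟨hspos.le, hsle, Or.inr ⟨hspos, le_of_eq hxseq, Or.inl hxseq⟩⟩
    · have h3' := h3 hA hB
      push_neg at hA hB
      subst h3'
      refine ⟨hαbar.le, le_refl _, Or.inr ⟨hαbar, ?_, Or.inr rfl⟩⟩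
      have hsq : (0:ℝ) < αstar ^ q := Real.rpow_pos_of_pos hαbar q
      have hw : (0:ℝ) < αstar ^ (q - 1) := Real.rpow_pos_of_pos hαbar _
      have he : (0:ℝ) < αstar ^ (1 - q) := Real.rpow_pos_of_pos hαbar _
      have hσpos : (0:ℝ) < σl ^ 2 + k * αstar ^ q := by nlinarith [mul_pos hk hsq]
      have hEpos : (0:ℝ) < (1 - p) * (σl ^ 2 + k * αstar ^ q) := by positivity
      by_cases hd : μl + αstar - r ≤ 0
      · have hxsn : (μl + αstar - r) / ((1 - p) * (σl ^ 2 + k * αstar ^ q)) ≤ 0 :=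
          div_nonpos_iff.mpr (Or.inr ⟨hd, hEpos.le⟩)
        have hpos : 0 ≤ (1 - p) / 2 * k *
            ((μl + αstar - r) / ((1 - p) * (σl ^ 2 + k * αstar ^ q))) ^ 2 *
              q * αstar ^ (q - 1) := by positivity
        linarith
      · push_neg at hd
        have hm2 : 0 < μl - r := hA (by linarith)
        have hm4 : 2 * σl ^ 2 * αstar ^ (1 - q) + k * (2 - q) * αstar ≤ (μl - r) * (k * q) :=
          (div_le_iff₀ hkq).mp (hB hm2)
        have hmulqq : αstar ^ q * αstar ^ (1 - q) = αstar := by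
          rw [← Real.rpow_add hαbar]
          norm_num
        have hmulw : αstar ^ (q - 1) * αstar ^ (1 - q) = 1 := by
          rw [← Real.rpow_add hαbar]
          norm_num
        have hbq' : k * (αstar ^ q * αstar ^ (1 - q)) = k * αstar := by rw [hmulqq]
        have key3 : 2 * (σl ^ 2 + k * αstar ^ q) * αstar ^ (1 - q) ≤
            k * q * (μl + αstar - r) := by linarith [hm4, hbq']
        have t := mul_le_mul_of_nonneg_right key3 hw.le
        have trw : 2 * (σl ^ 2 + k * αstar ^ q) * αstar ^ (1 - q) * αstar ^ (q - 1) =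
            2 * (σl ^ 2 + k * αstar ^ q) := by
          linear_combination (2 * (σl ^ 2 + k * αstar ^ q)) * hmulw
        have key3' : 2 * (σl ^ 2 + k * αstar ^ q) ≤
            k * q * (μl + αstar - r) * αstar ^ (q - 1) := by linarith [t, trw]
        exact stmt_14_slope_le_aux (1 - p) (σl ^ 2 + k * αstar ^ q)
          (μl + αstar - r) k q (αstar ^ (q - 1)) hp1 hσpos hd key3'
  -- common positivity facts
  have hsq0 : (0:ℝ) ≤ αstar ^ q := Real.rpow_nonneg hs0 q
  have hσpos : (0:ℝ) < σl ^ 2 + k * αstar ^ q := by nlinarith [mul_nonneg hk.le hsq0]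
  -- the quadratic bound : for every x, F x αstar ≤ V
  have hquad : ∀ x : ℝ,
      ((p - 1) / 2) * (σl ^ 2 + k * αstar ^ q) * x ^ 2 + (μl + αstar) * x + r * (1 - x) ≤
        (μl + αstar - r) ^ 2 / (2 * (1 - p) * (σl ^ 2 + k * αstar ^ q)) + r := by
    intro x
    have h := stmt_14_quad_aux (1 - p) (σl ^ 2 + k * αstar ^ q) (μl + αstar) r x hp1 hσpos
    linarith [h]
  -- value at the saddle point
  have hsaddle : ((p - 1) / 2) * (σl ^ 2 + k * αstar ^ q) *
      ((μl + αstar - r) / ((1 - p) * (σl ^ 2 + k * αstar ^ q))) ^ 2 +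
      (μl + αstar) * ((μl + αstar - r) / ((1 - p) * (σl ^ 2 + k * αstar ^ q))) +
      r * (1 - (μl + αstar - r) / ((1 - p) * (σl ^ 2 + k * αstar ^ q))) =
      (μl + αstar - r) ^ 2 / (2 * (1 - p) * (σl ^ 2 + k * αstar ^ q)) + r := by
    linear_combination stmt_14_saddle_aux (1 - p) (σl ^ 2 + k * αstar ^ q) (μl + αstar) r
      hp1 hσpos
  -- key inequality : for a ∈ [0, αbar], V ≤ F xs a
  have hkey : ∀ a ∈ Set.Icc (0:ℝ) αbar,
      (μl + αstar - r) ^ 2 / (2 * (1 - p) * (σl ^ 2 + k * αstar ^ q)) + r ≤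
      ((p - 1) / 2) * (σl ^ 2 + k * a ^ q) *
        ((μl + αstar - r) / ((1 - p) * (σl ^ 2 + k * αstar ^ q))) ^ 2 +
      (μl + a) * ((μl + αstar - r) / ((1 - p) * (σl ^ 2 + k * αstar ^ q))) +
      r * (1 - (μl + αstar - r) / ((1 - p) * (σl ^ 2 + k * αstar ^ q))) := by
    rintro a ⟨ha0, haαbar⟩
    have hineq : (1 - p) / 2 * k *
        ((μl + αstar - r) / ((1 - p) * (σl ^ 2 + k * αstar ^ q))) ^ 2 *
          (a ^ q - αstar ^ q) ≤
        (μl + αstar - r) / ((1 - p) * (σl ^ 2 + k * αstar ^ q)) * (a - αstar) := by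
      rcases hslope with hxs0 | ⟨hspos, hle, heqor⟩
      · rw [hxs0]
        norm_num
      · have htan := stmt_14_tangent q hq0 hq1 hspos ha0
        have hc0 : 0 ≤ (1 - p) / 2 * k *
            ((μl + αstar - r) / ((1 - p) * (σl ^ 2 + k * αstar ^ q))) ^ 2 := by positivity
        have step := mul_le_mul_of_nonneg_left htan hc0
        rcases heqor with heq | hbar
        · have h10 : (1 - p) / 2 * k *
              ((μl + αstar - r) / ((1 - p) * (σl ^ 2 + k * αstar ^ q))) ^ 2 *
                (q * αstar ^ (q - 1) * (a - αstar)) =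
              (μl + αstar - r) / ((1 - p) * (σl ^ 2 + k * αstar ^ q)) * (a - αstar) := by
            linear_combination (-(a - αstar)) * heq
          linarith [step, h10]
        · have han : αstar - a ≥ 0 := by rw [hbar]; linarith
          nlinarith [step, mul_nonneg (sub_nonneg.mpr hle) han]
    linarith [hineq, hsaddle]
  -- continuity / boundedness facts
  have hrq : Continuous fun a : ℝ => a ^ q := by
    rw [continuous_iff_continuousAt]
    exact fun a => Real.continuousAt_rpow_const a q (Or.inr hq0.le)
  have hbddB : ∀ x : ℝ, BddBelow ((fun a =>
      ((p - 1) / 2) * (σl ^ 2 + k * a ^ q) * x ^ 2 + (μl + a) * x + r * (1 - x)) ''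
      Set.Icc 0 αbar) := by
    intro x
    have hcont : Continuous fun a : ℝ =>
        ((p - 1) / 2) * (σl ^ 2 + k * a ^ q) * x ^ 2 + (μl + a) * x + r * (1 - x) := by
      exact (((continuous_const.mul (continuous_const.add
        (continuous_const.mul hrq))).mul continuous_const).add
        ((continuous_const.add continuous_id).mul continuous_const)).add continuous_const
    exact (isCompact_Icc.image hcont).bddBelow
  have hmemαstar : αstar ∈ Set.Icc (0:ℝ) αbar := ⟨hs0, hsle⟩
  -- upper bound for all inner infima
  have hub : ∀ x : ℝ, sInf ((fun a =>
      ((p - 1) / 2) * (σl ^ 2 + k * a ^ q) * x ^ 2 + (μl + a) * x + r * (1 - x)) ''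
      Set.Icc 0 αbar) ≤
      (μl + αstar - r) ^ 2 / (2 * (1 - p) * (σl ^ 2 + k * αstar ^ q)) + r := by
    intro x
    exact le_trans (csInf_le (hbddB x) ⟨αstar, hmemαstar, rfl⟩) (hquad x)
  -- the inner infimum at xs equals V
  have hGxs : sInf ((fun a =>
      ((p - 1) / 2) * (σl ^ 2 + k * a ^ q) *
        ((μl + αstar - r) / ((1 - p) * (σl ^ 2 + k * αstar ^ q))) ^ 2 +
      (μl + a) * ((μl + αstar - r) / ((1 - p) * (σl ^ 2 + k * αstar ^ q))) +
      r * (1 - (μl + αstar - r) / ((1 - p) * (σl ^ 2 + k * αstar ^ q)))) ''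
      Set.Icc 0 αbar) =
      (μl + αstar - r) ^ 2 / (2 * (1 - p) * (σl ^ 2 + k * αstar ^ q)) + r := by
    apply le_antisymm
    · exact le_trans (csInf_le (hbddB _) ⟨αstar, hmemαstar, rfl⟩) (le_of_eq hsaddle)
    · refine le_csInf ((Set.nonempty_Icc.mpr hαbar.le).image _) ?_
      rintro b ⟨a, ha, rfl⟩
      exact hkey a ha
  -- conclude
  rw [hK]
  have hmemV : ((μl + αstar - r) ^ 2 / (2 * (1 - p) * (σl ^ 2 + k * αstar ^ q)) + r) ∈
      Set.range (fun xπ : ℝ => sInf ((fun a =>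
        ((p - 1) / 2) * (σl ^ 2 + k * a ^ q) * xπ ^ 2 + (μl + a) * xπ + r * (1 - xπ)) ''
        Set.Icc 0 αbar)) :=
    ⟨(μl + αstar - r) / ((1 - p) * (σl ^ 2 + k * αstar ^ q)), hGxs⟩
  have hbddA : BddAbove (Set.range (fun xπ : ℝ => sInf ((fun a =>
      ((p - 1) / 2) * (σl ^ 2 + k * a ^ q) * xπ ^ 2 + (μl + a) * xπ + r * (1 - xπ)) ''
      Set.Icc 0 αbar))) := by
    refine ⟨(μl + αstar - r) ^ 2 / (2 * (1 - p) * (σl ^ 2 + k * αstar ^ q)) + r, ?_⟩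
    rintro y ⟨x, rfl⟩
    exact hub x
  apply le_antisymm
  · apply csSup_le (Set.range_nonempty _)
    rintro y ⟨x, rfl⟩
    exact hub x
  · exact le_csSup hbddA hmemV
end

section
/- Let n ≥ 1, let Σ be an n×n real symmetric positive definite matrix, let ε > 0, p ∈ (−∞,1), r ∈ ℝ and μ̂ ∈ ℝⁿ, and let 𝟙 ∈ ℝⁿ denote the vector with all entries equal to 1. Set H = √((μ̂ − r𝟙)ᵀ Σ⁻¹ (μ̂ − r𝟙)). Then sup_{x_π ∈ ℝⁿ} [ ((p−1)/2)·x_πᵀ Σ x_π − ε·√(x_πᵀ Σ x_π) + (μ̂ − r𝟙)ᵀ x_π + r ] = (max(H − ε, 0))²/(2(1−p)) + r. -/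
open Matrix

/-- Computation of K̂₁(Σ) in Theorem 4.3: supremum over unconstrained portfolios of the
reduced Hamiltonian. -/
theorem stmt_17 (n : ℕ) (hn : 1 ≤ n) (S : Matrix (Fin n) (Fin n) ℝ) (hS : S.PosDef)
    (ε p r : ℝ) (hε : 0 < ε) (hp : p < 1) (μhat : Fin n → ℝ) :
    sSup (Set.range (fun xπ : Fin n → ℝ =>
        ((p - 1) / 2) * (xπ ⬝ᵥ S.mulVec xπ) - ε * Real.sqrt (xπ ⬝ᵥ S.mulVec xπ)
          + (μhat - r • (1 : Fin n → ℝ)) ⬝ᵥ xπ + r))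
      = (max (Real.sqrt ((μhat - r • (1 : Fin n → ℝ)) ⬝ᵥ
            S⁻¹.mulVec (μhat - r • (1 : Fin n → ℝ))) - ε) 0) ^ 2 / (2 * (1 - p)) + r := by
  set b : Fin n → ℝ := μhat - r • (1 : Fin n → ℝ) with hbdef
  set q : ℝ := 1 - p with hqdef
  have hq : 0 < q := by simp only [hqdef]; linarith
  set H : ℝ := Real.sqrt (b ⬝ᵥ S⁻¹.mulVec b) with hHdef
  set c : ℝ := max (H - ε) 0 with hcdef
  have hc0 : 0 ≤ c := le_max_right _ _
  have hHc : H - ε ≤ c := le_max_left _ _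
  have hH0 : 0 ≤ H := Real.sqrt_nonneg _
  have hQ : ∀ x : Fin n → ℝ, 0 ≤ x ⬝ᵥ S.mulVec x := fun x => by
    simpa using hS.posSemidef.dotProduct_mulVec_nonneg x
  have hSinv : (S⁻¹).PosDef := Matrix.posDef_inv_iff.mpr hS
  have hinvnn : 0 ≤ b ⬝ᵥ S⁻¹.mulVec b := by simpa using hSinv.posSemidef.dotProduct_mulVec_nonneg b
  have hH2 : H ^ 2 = b ⬝ᵥ S⁻¹.mulVec b := Real.sq_sqrt hinvnn
  set y : Fin n → ℝ := S⁻¹.mulVec b with hydef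
  have hy : S.mulVec y = b := by
    rw [hydef, Matrix.mulVec_mulVec,
      Matrix.mul_nonsing_inv _ (isUnit_iff_ne_zero.mpr hS.det_pos.ne'), Matrix.one_mulVec]
  have hsymm : ∀ u v : Fin n → ℝ, u ⬝ᵥ S.mulVec v = (S.mulVec u) ⬝ᵥ v := by
    intro u v
    rw [Matrix.dotProduct_mulVec, ← Matrix.mulVec_transpose,
      ← Matrix.conjTranspose_eq_transpose_of_trivial, hS.1]
  have hyy : y ⬝ᵥ S.mulVec y = H ^ 2 := by
    rw [hsymm, hy, hH2]
  have hby : b ⬝ᵥ y = H ^ 2 := by rw [hydef, hH2]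
  clear_value b q H c y
  -- Cauchy–Schwarz
  have hCS : ∀ x : Fin n → ℝ, (b ⬝ᵥ x) ^ 2 ≤ H ^ 2 * (x ⬝ᵥ S.mulVec x) := by
    intro x
    have key : ∀ t : ℝ, 0 ≤ (x ⬝ᵥ S.mulVec x) * (t * t) + (2 * (b ⬝ᵥ x)) * t + H ^ 2 := by
      intro t
      have h0 := hQ (y + t • x)
      have e1 : y ⬝ᵥ S.mulVec x = b ⬝ᵥ x := by rw [hsymm, hy]
      have e2 : x ⬝ᵥ S.mulVec y = b ⬝ᵥ x := by rw [hy, dotProduct_comm]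
      simp only [Matrix.mulVec_add, Matrix.mulVec_smul, dotProduct_add, add_dotProduct,
        dotProduct_smul, smul_dotProduct, smul_eq_mul] at h0
      rw [e1, e2, hyy] at h0
      nlinarith [h0]
    have hd := discrim_le_zero key
    rw [discrim] at hd
    nlinarith [hd]
  -- upper bound for every x
  have hub : ∀ x : Fin n → ℝ,
      ((p - 1) / 2) * (x ⬝ᵥ S.mulVec x) - ε * Real.sqrt (x ⬝ᵥ S.mulVec x)
        + b ⬝ᵥ x + r ≤ c ^ 2 / (2 * q) + r := by
    intro x
    set z : ℝ := Real.sqrt (x ⬝ᵥ S.mulVec x) with hzdef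
    have hz0 : 0 ≤ z := Real.sqrt_nonneg _
    have hz2 : z ^ 2 = x ⬝ᵥ S.mulVec x := Real.sq_sqrt (hQ x)
    clear_value z
    have ht : b ⬝ᵥ x ≤ H * z := by
      nlinarith [hCS x, hz2, sq_nonneg (b ⬝ᵥ x - H * z), sq_nonneg (b ⬝ᵥ x + H * z),
        mul_nonneg hH0 hz0]
    rw [← hz2]
    have hp1 : p - 1 = -q := by rw [hqdef]; ring
    rw [hp1]
    have key : -q / 2 * z ^ 2 - ε * z + b ⬝ᵥ x ≤ c ^ 2 / (2 * q) := by
      have h1 : b ⬝ᵥ x - ε * z ≤ c * z := by nlinarith [mul_le_mul_of_nonneg_right hHc hz0]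
      have h2 : c * z - q / 2 * z ^ 2 ≤ c ^ 2 / (2 * q) := by
        rw [le_div_iff₀ (by positivity)]
        nlinarith [sq_nonneg (c - q * z)]
      linarith
    linarith
  have hbdd : BddAbove (Set.range (fun xπ : Fin n → ℝ =>
      ((p - 1) / 2) * (xπ ⬝ᵥ S.mulVec xπ) - ε * Real.sqrt (xπ ⬝ᵥ S.mulVec xπ)
        + b ⬝ᵥ xπ + r)) := by
    refine ⟨c ^ 2 / (2 * q) + r, ?_⟩
    rintro v ⟨x, rfl⟩
    exact hub x
  apply le_antisymm
  · exact csSup_le (Set.range_nonempty _) (by rintro v ⟨x, rfl⟩; exact hub x)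
  · -- attainment
    rcases le_or_gt H ε with hcase | hcase
    · have hc : c = 0 := hcdef.trans (max_eq_right (by linarith))
      have h0 : ((p - 1) / 2) * ((0 : Fin n → ℝ) ⬝ᵥ S.mulVec 0)
          - ε * Real.sqrt ((0 : Fin n → ℝ) ⬝ᵥ S.mulVec 0) + b ⬝ᵥ (0 : Fin n → ℝ) + r
          = c ^ 2 / (2 * q) + r := by
        simp [hc, Matrix.mulVec_zero]
      calc c ^ 2 / (2 * q) + r = _ := h0.symm
        _ ≤ _ := le_csSup hbdd ⟨0, rfl⟩
    · have hc : c = H - ε := hcdef.trans (max_eq_left (by linarith))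
      have hH : 0 < H := lt_trans hε hcase
      set k : ℝ := c / (q * H) with hkdef
      have hk0 : 0 ≤ k := by positivity
      clear_value k
      set x0 : Fin n → ℝ := k • y with hx0def
      have hQx0 : x0 ⬝ᵥ S.mulVec x0 = (k * H) ^ 2 := by
        rw [hx0def]
        simp only [Matrix.mulVec_smul, dotProduct_smul, smul_dotProduct, smul_eq_mul]
        rw [hyy]; ring
      have hsq : Real.sqrt (x0 ⬝ᵥ S.mulVec x0) = k * H := by
        rw [hQx0, Real.sqrt_sq (by positivity)]
      have hbx0 : b ⬝ᵥ x0 = k * H ^ 2 := by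
        rw [hx0def, dotProduct_smul, hby, smul_eq_mul]
      have hval : ((p - 1) / 2) * (x0 ⬝ᵥ S.mulVec x0) - ε * Real.sqrt (x0 ⬝ᵥ S.mulVec x0)
          + b ⬝ᵥ x0 + r = c ^ 2 / (2 * q) + r := by
        rw [hsq, hQx0, hbx0]
        have hp1 : p - 1 = -q := by rw [hqdef]; ring
        rw [hp1, hkdef, hc]
        field_simp
        ring
      calc c ^ 2 / (2 * q) + r = _ := hval.symm
        _ ≤ _ := le_csSup hbdd ⟨x0, rfl⟩
end

section
/- Let p ∈ (−∞,1), r ∈ ℝ, μ̂ ∈ ℝ, s > 0, let N ≥ 2 be an integer, and let t_q > 0 and 0 < χ_l ≤ χ_u be real numbers. Set δ = t_q·s/√N, and define K = sup_{x_π ∈ ℝ} inf_{(μ, v) ∈ [μ̂ − δ, μ̂ + δ] × [(N−1)s²/χ_u, (N−1)s²/χ_l]} [ ((p−1)/2)·v·x_π² + μ·x_π + r·(1 − x_π) ]. Then K = (max(|μ̂ − r| − t_q·s/√N, 0))²/(2(1−p)) · χ_l/((N−1)s²) + r. -/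
set_option maxHeartbeats 1000000

/-- Theorem 4.4: the Investment Opportunity Index when the ambiguity set is built from
confidence intervals of a sample of size N (sample mean μ̂, sample variance s²). -/
theorem stmt_19 (p r μhat s tq χl χu K : ℝ) (N : ℕ)
    (hp : p < 1) (hs : 0 < s) (hN : 2 ≤ N) (htq : 0 < tq) (hχl : 0 < χl) (hχ : χl ≤ χu)
    (hK : K = sSup (Set.range (fun xπ : ℝ => sInf ((fun q : ℝ × ℝ =>
        ((p - 1) / 2) * q.2 * xπ ^ 2 + q.1 * xπ + r * (1 - xπ)) ''
        (Set.Icc (μhat - tq * s / Real.sqrt N) (μhat + tq * s / Real.sqrt N) ×ˢ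
         Set.Icc (((N : ℝ) - 1) * s ^ 2 / χu) (((N : ℝ) - 1) * s ^ 2 / χl)))))) :
    K = (max (|μhat - r| - tq * s / Real.sqrt N) 0) ^ 2 / (2 * (1 - p))
          * (χl / (((N : ℝ) - 1) * s ^ 2)) + r := by
  have hχu : 0 < χu := lt_of_lt_of_le hχl hχ
  have hN2 : (2:ℝ) ≤ (N:ℝ) := by exact_mod_cast hN
  have hN1 : (0:ℝ) < (N:ℝ) - 1 := by linarith
  have hNpos : (0:ℝ) < (N:ℝ) := by linarith
  set δ := tq * s / Real.sqrt N with hδdef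
  have hδ : 0 < δ := by
    apply div_pos (mul_pos htq hs)
    exact Real.sqrt_pos.mpr hNpos
  set vhi := ((N : ℝ) - 1) * s ^ 2 / χl with hvhidef
  set vlo := ((N : ℝ) - 1) * s ^ 2 / χu with hvlodef
  have hs2 : 0 < s ^ 2 := pow_pos hs 2
  have hvhipos : 0 < vhi := div_pos (mul_pos hN1 hs2) hχl
  have hvle : vlo ≤ vhi :=
    div_le_div_of_nonneg_left (le_of_lt (mul_pos hN1 hs2)) hχl hχ
  set c := (p - 1) / 2 * vhi with hcdef
  have hc : c < 0 := mul_neg_of_neg_of_pos (by linarith) hvhipos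
  set M := max (|μhat - r| - δ) 0 with hMdef
  have hM0 : 0 ≤ M := le_max_right _ _
  have hM1 : |μhat - r| - δ ≤ M := le_max_left _ _
  set g : ℝ → ℝ := fun x => c * x ^ 2 + μhat * x - δ * |x| + r * (1 - x) with hgdef
  -- common lower bound estimates
  have hlb : ∀ x μ v : ℝ, μhat - δ ≤ μ → μ ≤ μhat + δ → v ≤ vhi →
      c * x ^ 2 + μhat * x - δ * |x| + r * (1 - x) ≤
        (p - 1) / 2 * v * x ^ 2 + μ * x + r * (1 - x) := by
    intro x μ v hμ1 hμ2 hv2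
    have h1 : c * x ^ 2 ≤ (p - 1) / 2 * v * x ^ 2 := by
      have h := mul_nonneg (mul_nonneg (by linarith : (0:ℝ) ≤ (1 - p) / 2)
        (by linarith : (0:ℝ) ≤ vhi - v)) (sq_nonneg x)
      rw [hcdef]
      nlinarith [h]
    have h2 : μhat * x - δ * |x| ≤ μ * x := by
      have hle : |(μ - μhat) * x| ≤ δ * |x| := by
        rw [abs_mul]
        apply mul_le_mul_of_nonneg_right _ (abs_nonneg x)
        rw [abs_le]; constructor <;> linarith
      have hge := neg_abs_le ((μ - μhat) * x)
      nlinarith [hle, hge]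
    linarith
  -- inner infimum computation
  have key : ∀ x : ℝ, sInf ((fun q : ℝ × ℝ =>
      ((p - 1) / 2) * q.2 * x ^ 2 + q.1 * x + r * (1 - x)) ''
      (Set.Icc (μhat - δ) (μhat + δ) ×ˢ Set.Icc vlo vhi)) = g x := by
    intro x
    apply le_antisymm
    · -- sInf ≤ g x : g x is achieved
      apply csInf_le
      · refine ⟨g x, ?_⟩
        rintro y ⟨⟨μ, v⟩, ⟨⟨hμ1, hμ2⟩, ⟨hv1, hv2⟩⟩, rfl⟩
        simp only at hμ1 hμ2 hv1 hv2
        exact hlb x μ v hμ1 hμ2 hv2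
      · refine ⟨(μhat - Real.sign x * δ, vhi), ⟨⟨?_, ?_⟩, ⟨hvle, le_refl _⟩⟩, ?_⟩
        · show μhat - δ ≤ μhat - Real.sign x * δ
          have hsle : Real.sign x ≤ 1 := by
            rcases lt_trichotomy x 0 with h | h | h
            · rw [Real.sign_of_neg h]; norm_num
            · rw [h, Real.sign_zero]; norm_num
            · rw [Real.sign_of_pos h]
          nlinarith [hsle, hδ]
        · show μhat - Real.sign x * δ ≤ μhat + δ
          have hsge : -1 ≤ Real.sign x := by
            rcases lt_trichotomy x 0 with h | h | h
            · rw [Real.sign_of_neg h]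
            · rw [h, Real.sign_zero]; norm_num
            · rw [Real.sign_of_pos h]; norm_num
          nlinarith [hsge, hδ]
        · show (p - 1) / 2 * vhi * x ^ 2 + (μhat - Real.sign x * δ) * x + r * (1 - x) =
            c * x ^ 2 + μhat * x - δ * |x| + r * (1 - x)
          have hsx : Real.sign x * x = |x| := by
            rcases lt_trichotomy x 0 with h | h | h
            · rw [Real.sign_of_neg h, abs_of_neg h]; ring
            · rw [h]; simp
            · rw [Real.sign_of_pos h, abs_of_pos h]; ring
          rw [hcdef]
          nlinarith [hsx]
    · -- g x is a lower bound
      apply le_csInf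
      · exact ⟨_, ⟨(μhat, vhi), ⟨⟨by linarith, by linarith⟩, ⟨hvle, le_refl _⟩⟩, rfl⟩⟩
      · rintro y ⟨⟨μ, v⟩, ⟨⟨hμ1, hμ2⟩, ⟨hv1, hv2⟩⟩, rfl⟩
        simp only at hμ1 hμ2 hv1 hv2
        exact hlb x μ v hμ1 hμ2 hv2
  -- rewrite K
  have hK' : K = sSup (Set.range g) := by
    have hfun : (fun xπ : ℝ => sInf ((fun q : ℝ × ℝ =>
        ((p - 1) / 2) * q.2 * xπ ^ 2 + q.1 * xπ + r * (1 - xπ)) ''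
        (Set.Icc (μhat - δ) (μhat + δ) ×ˢ Set.Icc vlo vhi))) = g := funext key
    rw [hK, hfun]
  set T := M ^ 2 / (2 * (1 - p) * vhi) + r with hTdef
  have hD : 0 < 2 * (1 - p) * vhi := by
    apply mul_pos (by linarith) hvhipos
  -- upper bound
  have hub : ∀ x : ℝ, g x ≤ T := by
    intro x
    have habs : 0 ≤ |x| := abs_nonneg x
    have hcpos : (0:ℝ) ≤ -(4 * c) := by linarith
    have hmx : (μhat - r) * x ≤ |μhat - r| * |x| := by
      calc (μhat - r) * x ≤ |(μhat - r) * x| := le_abs_self _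
        _ = |μhat - r| * |x| := abs_mul _ _
    have hkey : (c * x ^ 2 + μhat * x - δ * |x| + r * (1 - x) - r) * (2 * (1 - p) * vhi)
        ≤ M ^ 2 := by
      have hcv : 2 * (1 - p) * vhi = -(4 * c) := by rw [hcdef]; ring
      rw [hcv]
      have hint1 := mul_le_mul_of_nonneg_left hmx hcpos
      have hint2 := mul_le_mul_of_nonneg_left hM1 (mul_nonneg hcpos habs)
      have hsqe : M ^ 2 + 4 * c * M * |x| + 4 * c ^ 2 * x ^ 2 = (M + 2 * c * |x|) ^ 2 := by
        rw [← sq_abs x]; ring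
      have hsq : 0 ≤ M ^ 2 + 4 * c * M * |x| + 4 * c ^ 2 * x ^ 2 := by
        rw [hsqe]; exact sq_nonneg _
      nlinarith [hsq, hint1, hint2]
    have h2 := (le_div_iff₀ hD).mpr hkey
    show c * x ^ 2 + μhat * x - δ * |x| + r * (1 - x) ≤ M ^ 2 / (2 * (1 - p) * vhi) + r
    linarith [h2]
  -- the bound is attained
  have hatt : ∃ x₀ : ℝ, g x₀ = T := by
    by_cases hcase : |μhat - r| ≤ δ
    · refine ⟨0, ?_⟩
      have hMz : M = 0 := by rw [hMdef]; apply max_eq_right; linarith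
      show c * 0 ^ 2 + μhat * 0 - δ * |(0:ℝ)| + r * (1 - 0) = M ^ 2 / (2 * (1 - p) * vhi) + r
      rw [hMz]; simp
    · push_neg at hcase
      have hMeq : M = |μhat - r| - δ := by rw [hMdef]; apply max_eq_left; linarith
      set t := M / (2 * (1 - p) * vhi / 2) with htdef
      have hden : 0 < 2 * (1 - p) * vhi / 2 := by linarith
      have ht0 : 0 ≤ t := div_nonneg hM0 (le_of_lt hden)
      have hvne : vhi ≠ 0 := ne_of_gt hvhipos
      have hpne : (1:ℝ) - p ≠ 0 := by intro h; nlinarith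
      have hct : c * t ^ 2 + M * t = M ^ 2 / (2 * (1 - p) * vhi) := by
        rw [htdef, hcdef]
        field_simp
        ring
      by_cases hmpos : 0 ≤ μhat - r
      · refine ⟨t, ?_⟩
        have habs : |t| = t := abs_of_nonneg ht0
        have hme : |μhat - r| = μhat - r := abs_of_nonneg hmpos
        have hMt : M * t = (μhat - r - δ) * t := by rw [hMeq, hme]
        show c * t ^ 2 + μhat * t - δ * |t| + r * (1 - t) = M ^ 2 / (2 * (1 - p) * vhi) + r
        rw [habs]
        linarith [hct, hMt]
      · push_neg at hmpos
        refine ⟨-t, ?_⟩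
        have habs : |(-t)| = t := by rw [abs_neg, abs_of_nonneg ht0]
        have hme : |μhat - r| = -(μhat - r) := abs_of_neg hmpos
        have hMt : M * t = (-(μhat - r) - δ) * t := by rw [hMeq, hme]
        show c * (-t) ^ 2 + μhat * (-t) - δ * |(-t)| + r * (1 - -t)
          = M ^ 2 / (2 * (1 - p) * vhi) + r
        rw [habs]
        have hsq : (-t) ^ 2 = t ^ 2 := by ring
        rw [hsq]
        linarith [hct, hMt]
  obtain ⟨x₀, hx₀⟩ := hatt
  have hne : (Set.range g).Nonempty := Set.range_nonempty g
  have hbdd : BddAbove (Set.range g) := by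
    refine ⟨T, ?_⟩
    rintro y ⟨x, rfl⟩
    exact hub x
  have hsup : sSup (Set.range g) = T := by
    apply le_antisymm
    · apply csSup_le hne
      rintro y ⟨x, rfl⟩
      exact hub x
    · rw [← hx₀]
      exact le_csSup hbdd ⟨x₀, rfl⟩
  rw [hK', hsup, hTdef]
  have hfin : M ^ 2 / (2 * (1 - p) * vhi)
      = M ^ 2 / (2 * (1 - p)) * (χl / (((N : ℝ) - 1) * s ^ 2)) := by
    rw [hvhidef]
    have h1 : (1:ℝ) - p ≠ 0 := by intro h; nlinarith
    have h2 : ((N:ℝ) - 1) ≠ 0 := ne_of_gt hN1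
    have h3 : s ≠ 0 := ne_of_gt hs
    have h4 : χl ≠ 0 := ne_of_gt hχl
    field_simp
  rw [hfin]
end
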